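/- arXiv:1507.01308 — 3 statements merged into one kernel-verified Lean document; each statement's English description precedes it below -/
import Mathlib

section
/- Let n, m1, m2 be positive integers with n > 2(m1 + m2). Then for Lebesgue-almost all pairs (D, E) ∈ ℂ^{n×m1} × ℂ^{n×m2}, the following holds: for every x0 ∈ ℂ^{m1} with x0 ≠ 0, every y0 ∈ ℂ^{m2} with y0 ≠ 0, and every pair (x, y) ∈ ℂ^{m1} × ℂ^{m2} satisfying (D x) ⊛ (E y) = (D x0) ⊛ (E y0), there exists a nonzero σ ∈ ℂ with x = σ x0 and y = σ⁻¹ y0. (Strong identifiability of blind deconvolution with subspace constraints.) -/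
open MeasureTheory Filter

/-- Circular convolution of two vectors in `ℂ^n` indexed by `ZMod n`. -/
noncomputable def cconv {n : ℕ} [NeZero n] (u v : ZMod n → ℂ) : ZMod n → ℂ :=
  fun k => ∑ j : ZMod n, u j * v (k - j)

/-- Matrix-vector multiplication `D x` for `D ∈ ℂ^{n×m}`. -/
noncomputable def mApply {n m : ℕ} [NeZero n] (D : ZMod n → Fin m → ℂ) (x : Fin m → ℂ) :
    ZMod n → ℂ :=
  fun k => ∑ i, D k i * x i

open Module Measure NNReal ENNReal Finset

section DFT
variable {n : ℕ} [NeZero n]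

lemma dft_cconv (u v : ZMod n → ℂ) (k : ZMod n) :
    ZMod.dft (cconv u v) k = ZMod.dft u k * ZMod.dft v k := by
  have key : ∀ j t : ZMod n, (ZMod.stdAddChar (-((t + j) * k)) : ℂ)
      = ZMod.stdAddChar (-(j * k)) * ZMod.stdAddChar (-(t * k)) := by
    intro j t
    rw [← AddChar.map_add_eq_mul]
    congr 1
    ring
  calc ZMod.dft (cconv u v) k
      = ∑ t : ZMod n, ∑ j : ZMod n, ZMod.stdAddChar (-(t * k)) * (u j * v (t - j)) := by
        simp only [ZMod.dft_apply, cconv, smul_eq_mul, Finset.mul_sum]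
    _ = ∑ j : ZMod n, ∑ t : ZMod n, ZMod.stdAddChar (-(t * k)) * (u j * v (t - j)) :=
        Finset.sum_comm
    _ = ∑ j : ZMod n, ∑ s : ZMod n,
          (ZMod.stdAddChar (-(j * k)) * u j) * (ZMod.stdAddChar (-(s * k)) * v s) := by
        refine Finset.sum_congr rfl fun j _ => ?_
        refine (Fintype.sum_equiv (Equiv.addRight j)
          (fun s => (ZMod.stdAddChar (-(j * k)) * u j) * (ZMod.stdAddChar (-(s * k)) * v s))
          (fun t => ZMod.stdAddChar (-(t * k)) * (u j * v (t - j))) (fun s => ?_)).symm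
        simp only [Equiv.coe_addRight]
        have h1 : s + j - j = s := by ring
        rw [h1, key j s]
        ring
    _ = ZMod.dft u k * ZMod.dft v k := by
        simp only [ZMod.dft_apply, smul_eq_mul, Finset.sum_mul_sum]

lemma dft_mApply {m : ℕ} (D : ZMod n → Fin m → ℂ) (x : Fin m → ℂ) (k : ZMod n) :
    ZMod.dft (mApply D x) k = ∑ i, ZMod.dft (fun l => D l i) k * x i := by
  simp only [ZMod.dft_apply, mApply, smul_eq_mul, Finset.mul_sum, Finset.sum_mul]
  rw [Finset.sum_comm]
  exact Finset.sum_congr rfl fun i _ => Finset.sum_congr rfl fun l _ => by ring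

end DFT

lemma rank_one_factor {m1 m2 : ℕ} {x x0 : Fin m1 → ℂ} {y y0 : Fin m2 → ℂ}
    (hx0 : x0 ≠ 0) (hy0 : y0 ≠ 0) (h : ∀ i j, x i * y j = x0 i * y0 j) :
    ∃ σ : ℂ, σ ≠ 0 ∧ x = σ • x0 ∧ y = σ⁻¹ • y0 := by
  obtain ⟨i0, hi0⟩ : ∃ i, x0 i ≠ 0 := by
    by_contra h'; push_neg at h'; exact hx0 (funext fun i => h' i)
  obtain ⟨j0, hj0⟩ : ∃ j, y0 j ≠ 0 := by
    by_contra h'; push_neg at h'; exact hy0 (funext fun j => h' j)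
  have hne : x i0 * y j0 ≠ 0 := by rw [h i0 j0]; exact mul_ne_zero hi0 hj0
  have hxi0 : x i0 ≠ 0 := left_ne_zero_of_mul hne
  have hyj0 : y j0 ≠ 0 := right_ne_zero_of_mul hne
  refine ⟨y0 j0 / y j0, div_ne_zero hj0 hyj0, ?_, ?_⟩
  · funext i
    simp only [Pi.smul_apply, smul_eq_mul]
    field_simp
    linear_combination h i j0
  · funext j
    have key : x i0 * (y j * y0 j0) = x i0 * (y j0 * y0 j) := by
      linear_combination y0 j0 * h i0 j - y0 j * h i0 j0
    have hc := mul_left_cancel₀ hxi0 key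
    simp only [Pi.smul_apply, smul_eq_mul]
    rw [inv_div]
    field_simp
    linear_combination hc

section Spaces
variable (n m1 m2 : ℕ) [NeZero n]

abbrev PSp (m1 m2 : ℕ) : Type :=
  ((Fin m1 → ℂ) × (Fin m2 → ℂ)) × ((Fin m1 → ℂ) × (Fin m2 → ℂ))
abbrev OmSp (n m1 m2 : ℕ) [NeZero n] : Type :=
  (ZMod n → Fin m1 → ℂ) × (ZMod n → Fin m2 → ℂ)
abbrev ZSp (n m1 m2 : ℕ) [NeZero n] : Type := PSp m1 m2 × OmSp n m1 m2
abbrev Tag (m1 m2 : ℕ) : Type := Fin m1 ⊕ (Fin m1 × Fin m2)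

instance haar1 : IsAddHaarMeasure (volume : Measure (ZMod n → Fin m1 → ℂ)) := by
  refine @IsAddHaarMeasure.mk _ _ _ _ _ ?_ ?_ ?_
  · exact Measure.pi.isFiniteMeasureOnCompacts _
  · infer_instance
  · exact Measure.pi.isOpenPosMeasure _

instance haarOm : IsAddHaarMeasure (volume : Measure (OmSp n m1 m2)) :=
  prod.instIsAddHaarMeasure _ _

end Spaces

section Defs
variable {n m1 m2 : ℕ} [NeZero n]

noncomputable def Mmat (p : PSp m1 m2) : Fin m1 → Fin m2 → ℂ :=
  fun i j => p.1.1 i * p.1.2 j - p.2.1 i * p.2.2 j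

noncomputable def MbV (M : Fin m1 → Fin m2 → ℂ) (b : Fin m2 → ℂ) : Fin m1 → ℂ :=
  fun i => ∑ j, M i j * b j

def badSet (n m1 m2 : ℕ) [NeZero n] : Set (OmSp n m1 m2) :=
  {AB | ∃ p : PSp m1 m2, Mmat p ≠ 0 ∧ ∀ k, ∑ i, AB.1 k i * MbV (Mmat p) (AB.2 k) i = 0}

lemma Q_expand (x x0 : Fin m1 → ℂ) (y y0 : Fin m2 → ℂ) (a : Fin m1 → ℂ) (b : Fin m2 → ℂ) :
    ∑ i, a i * MbV (Mmat ((x, y), (x0, y0))) b i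
      = (∑ i, a i * x i) * (∑ j, b j * y j) - (∑ i, a i * x0 i) * (∑ j, b j * y0 j) := by
  have hrow : ∀ i, a i * MbV (Mmat ((x, y), (x0, y0))) b i
      = ∑ j, ((a i * x i) * (b j * y j) - (a i * x0 i) * (b j * y0 j)) := by
    intro i
    simp only [MbV, Mmat, Finset.mul_sum]
    exact Finset.sum_congr rfl fun j _ => by ring
  rw [Finset.sum_congr rfl (fun i _ => hrow i), Finset.sum_mul_sum, Finset.sum_mul_sum]
  simp only [← Finset.sum_sub_distrib]

def thetaFun (τ : ZMod n → Tag m1 m2) (AB : OmSp n m1 m2) : ZMod n → ℂ :=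
  fun k => Sum.elim (fun i => AB.1 k i) (fun ij => AB.2 k ij.2) (τ k)

noncomputable def thetaL (τ : ZMod n → Tag m1 m2) : OmSp n m1 m2 →ₗ[ℂ] (ZMod n → ℂ) where
  toFun := thetaFun τ
  map_add' AB CD := by
    funext k
    rcases h : τ k with i | ij <;> simp [thetaFun, h]
  map_smul' c AB := by
    funext k
    rcases h : τ k with i | ij <;> simp [thetaFun, h]

lemma thetaL_surjective (τ : ZMod n → Tag m1 m2) : Function.Surjective (thetaL τ) := by
  classical
  intro c
  refine ⟨(fun k i' => Sum.elim (fun i => if i' = i then c k else 0) (fun _ => 0) (τ k),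
          fun k j' => Sum.elim (fun _ => 0) (fun ij => if j' = ij.2 then c k else 0) (τ k)), ?_⟩
  funext k
  rcases h : τ k with i | ij <;> simp [thetaL, thetaFun, h]

noncomputable def ThetaR (τ : ZMod n → Tag m1 m2) : ZSp n m1 m2 →ₗ[ℝ] (ZMod n → ℂ) :=
  ((thetaL τ).restrictScalars ℝ).comp (LinearMap.snd ℝ (PSp m1 m2) (OmSp n m1 m2))

noncomputable def Wsub (τ : ZMod n → Tag m1 m2) : Submodule ℝ (ZSp n m1 m2) :=
  LinearMap.ker (ThetaR τ)

lemma ThetaR_surjective (τ : ZMod n → Tag m1 m2) : Function.Surjective (ThetaR τ) :=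
  fun c => by
    obtain ⟨AB, hAB⟩ := thetaL_surjective τ c
    exact ⟨(0, AB), hAB⟩

lemma Wsub_finrank_lt (hn : 2 * (m1 + m2) < n) (τ : ZMod n → Tag m1 m2) :
    finrank ℝ (Wsub τ) < finrank ℝ (OmSp n m1 m2) := by
  have h := LinearMap.finrank_range_add_finrank_ker (ThetaR τ)
  rw [LinearMap.range_eq_top.2 (ThetaR_surjective τ), finrank_top] at h
  have e1 : finrank ℝ (ZMod n → ℂ) = 2 * n := by
    simp [finrank_pi_fintype, Complex.finrank_real_complex, ZMod.card]
    ring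
  have e2 : finrank ℝ (ZSp n m1 m2) = finrank ℝ (PSp m1 m2) + finrank ℝ (OmSp n m1 m2) :=
    Module.finrank_prod
  have e3 : finrank ℝ (PSp m1 m2) = 4 * (m1 + m2) := by
    simp [finrank_prod, finrank_pi_fintype, Complex.finrank_real_complex]
    ring
  rw [e1, e2, e3] at h
  show finrank ℝ (LinearMap.ker (ThetaR τ)) < finrank ℝ (OmSp n m1 m2)
  omega

def Uset (τ : ZMod n → Tag m1 m2) : Set (ZSp n m1 m2) :=
  {z | ∀ k, Sum.elim (fun i => MbV (Mmat z.1) (z.2.2 k) i ≠ 0)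
        (fun ij => Mmat z.1 ij.1 ij.2 ≠ 0) (τ k)}

noncomputable def psiFun (τ : ZMod n → Tag m1 m2) (z : ZSp n m1 m2) : OmSp n m1 m2 :=
  (fun k => Sum.elim
      (fun i => Function.update (z.2.1 k) i
        (-(∑ i' ∈ Finset.univ.erase i, z.2.1 k i' * MbV (Mmat z.1) (z.2.2 k) i')
          / MbV (Mmat z.1) (z.2.2 k) i))
      (fun _ => z.2.1 k) (τ k),
   fun k => Sum.elim (fun _ => z.2.2 k)
      (fun ij => Function.update (z.2.2 k) ij.2
        (-(∑ j ∈ Finset.univ.erase ij.2, Mmat z.1 ij.1 j * z.2.2 k j) / Mmat z.1 ij.1 ij.2))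
      (τ k))

lemma badSet_cover :
    badSet n m1 m2 ⊆
      ⋃ τ : ZMod n → Tag m1 m2, psiFun τ '' ((Wsub τ : Set (ZSp n m1 m2)) ∩ Uset τ) := by
  classical
  rintro ⟨A, B⟩ ⟨p, hM, hQ⟩
  obtain ⟨ij0, hij0⟩ : ∃ ij : Fin m1 × Fin m2, Mmat p ij.1 ij.2 ≠ 0 := by
    by_contra h'; push_neg at h'
    exact hM (funext fun i => funext fun j => h' (i, j))
  set τ : ZMod n → Tag m1 m2 := fun k =>
    if h : ∃ i, MbV (Mmat p) (B k) i ≠ 0 then Sum.inl h.choose else Sum.inr ij0 with hτ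
  set A0 : ZMod n → Fin m1 → ℂ :=
    fun k => Sum.elim (fun i => Function.update (A k) i 0) (fun _ => A k) (τ k) with hA0
  set B0 : ZMod n → Fin m2 → ℂ :=
    fun k => Sum.elim (fun _ => B k) (fun ij => Function.update (B k) ij.2 0) (τ k) with hB0
  refine Set.mem_iUnion.2 ⟨τ, (p, (A0, B0)), ⟨?_, ?_⟩, ?_⟩
  · -- kernel membership
    show (p, (A0, B0)) ∈ LinearMap.ker (ThetaR τ)
    rw [LinearMap.mem_ker]
    funext k
    show thetaFun τ (A0, B0) k = 0
    by_cases h : ∃ i, MbV (Mmat p) (B k) i ≠ 0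
    · simp [thetaFun, hτ, h, hA0, Function.update_self]
    · simp [thetaFun, hτ, h, hB0, Function.update_self]
  · -- U membership
    intro k
    by_cases h : ∃ i, MbV (Mmat p) (B k) i ≠ 0
    · have hBk : B0 k = B k := by simp [hB0, hτ, h]
      simp only [hτ, h, dif_pos, Sum.elim_inl, hBk]
      exact h.choose_spec
    · simp only [hτ, h, dif_neg, not_false_iff, Sum.elim_inr]
      exact hij0
  · -- psiFun maps back
    show psiFun τ (p, (A0, B0)) = (A, B)
    refine Prod.ext ?_ ?_ <;> funext k
    · show Sum.elim _ _ (τ k) = A k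
      by_cases h : ∃ i, MbV (Mmat p) (B k) i ≠ 0
      · have hBk : B0 k = B k := by simp [hB0, hτ, h]
        have hAk : A0 k = Function.update (A k) h.choose 0 := by simp [hA0, hτ, h]
        simp only [hτ, h, dif_pos, Sum.elim_inl, hBk, hAk, Function.update_idem]
        have hw : MbV (Mmat p) (B k) h.choose ≠ 0 := h.choose_spec
        have hsum : ∑ i' ∈ Finset.univ.erase h.choose,
            Function.update (A k) h.choose 0 i' * MbV (Mmat p) (B k) i'
            = ∑ i' ∈ Finset.univ.erase h.choose, A k i' * MbV (Mmat p) (B k) i' := by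
          refine Finset.sum_congr rfl fun i' hi' => ?_
          rw [Function.update_of_ne (Finset.ne_of_mem_erase hi')]
        rw [hsum]
        have htot := hQ k
        rw [← Finset.add_sum_erase _ _ (Finset.mem_univ h.choose)] at htot
        have : A k h.choose =
            -(∑ i' ∈ Finset.univ.erase h.choose, A k i' * MbV (Mmat p) (B k) i')
              / MbV (Mmat p) (B k) h.choose := by
          rw [eq_div_iff hw]
          linear_combination htot
        rw [← this, Function.update_eq_self]
      · have hAk : A0 k = A k := by simp [hA0, hτ, h]
        simp only [hτ, h, dif_neg, not_false_iff, Sum.elim_inr, hAk]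
    · show Sum.elim _ _ (τ k) = B k
      by_cases h : ∃ i, MbV (Mmat p) (B k) i ≠ 0
      · have hBk : B0 k = B k := by simp [hB0, hτ, h]
        simp only [hτ, h, dif_pos, Sum.elim_inl, hBk]
      · have hBk : B0 k = Function.update (B k) ij0.2 0 := by simp [hB0, hτ, h]
        simp only [hτ, h, dif_neg, not_false_iff, Sum.elim_inr, hBk, Function.update_idem]
        push_neg at h
        have hzero : MbV (Mmat p) (B k) ij0.1 = 0 := h ij0.1
        have hsum : ∑ j ∈ Finset.univ.erase ij0.2,
            Mmat p ij0.1 j * Function.update (B k) ij0.2 0 j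
            = ∑ j ∈ Finset.univ.erase ij0.2, Mmat p ij0.1 j * B k j := by
          refine Finset.sum_congr rfl fun j hj => ?_
          rw [Function.update_of_ne (Finset.ne_of_mem_erase hj)]
        rw [hsum]
        have htot : Mmat p ij0.1 ij0.2 * B k ij0.2
            + ∑ j ∈ Finset.univ.erase ij0.2, Mmat p ij0.1 j * B k j = 0 := by
          have hz' : ∑ j, Mmat p ij0.1 j * B k j = 0 := hzero
          rw [← Finset.add_sum_erase _ _ (Finset.mem_univ ij0.2)] at hz'
          exact hz'
        have : B k ij0.2 =
            -(∑ j ∈ Finset.univ.erase ij0.2, Mmat p ij0.1 j * B k j) / Mmat p ij0.1 ij0.2 := by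
          rw [eq_div_iff hij0]
          linear_combination htot
        rw [← this, Function.update_eq_self]

lemma psi_contDiffAt (τ : ZMod n → Tag m1 m2) (z : ZSp n m1 m2) (hz : z ∈ Uset τ) :
    ContDiffAt ℝ 1 (psiFun τ) z := by
  have cA : ∀ (k : ZMod n) (i : Fin m1),
      ContDiff ℂ 1 (fun w : ZSp n m1 m2 => w.2.1 k i) := fun k i =>
    (contDiff_apply ℂ ℂ i).comp ((contDiff_apply ℂ (Fin m1 → ℂ) k).comp
      (contDiff_fst.comp contDiff_snd))
  have cArow : ∀ (k : ZMod n),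
      ContDiff ℂ 1 (fun w : ZSp n m1 m2 => w.2.1 k) := fun k =>
    (contDiff_apply ℂ (Fin m1 → ℂ) k).comp (contDiff_fst.comp contDiff_snd)
  have cB : ∀ (k : ZMod n) (j : Fin m2),
      ContDiff ℂ 1 (fun w : ZSp n m1 m2 => w.2.2 k j) := fun k j =>
    (contDiff_apply ℂ ℂ j).comp ((contDiff_apply ℂ (Fin m2 → ℂ) k).comp
      (contDiff_snd.comp contDiff_snd))
  have cBrow : ∀ (k : ZMod n),
      ContDiff ℂ 1 (fun w : ZSp n m1 m2 => w.2.2 k) := fun k =>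
    (contDiff_apply ℂ (Fin m2 → ℂ) k).comp (contDiff_snd.comp contDiff_snd)
  have cx : ∀ i, ContDiff ℂ 1 (fun w : ZSp n m1 m2 => w.1.1.1 i) := fun i =>
    (contDiff_apply ℂ ℂ i).comp ((contDiff_fst.comp contDiff_fst).comp contDiff_fst)
  have cy : ∀ j, ContDiff ℂ 1 (fun w : ZSp n m1 m2 => w.1.1.2 j) := fun j =>
    (contDiff_apply ℂ ℂ j).comp ((contDiff_snd.comp contDiff_fst).comp contDiff_fst)
  have cx0 : ∀ i, ContDiff ℂ 1 (fun w : ZSp n m1 m2 => w.1.2.1 i) := fun i =>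
    (contDiff_apply ℂ ℂ i).comp ((contDiff_fst.comp contDiff_snd).comp contDiff_fst)
  have cy0 : ∀ j, ContDiff ℂ 1 (fun w : ZSp n m1 m2 => w.1.2.2 j) := fun j =>
    (contDiff_apply ℂ ℂ j).comp ((contDiff_snd.comp contDiff_snd).comp contDiff_fst)
  have cM : ∀ i j, ContDiff ℂ 1 (fun w : ZSp n m1 m2 => Mmat w.1 i j) := fun i j =>
    ((cx i).mul (cy j)).sub ((cx0 i).mul (cy0 j))
  have cMb : ∀ (k : ZMod n) (i : Fin m1),
      ContDiff ℂ 1 (fun w : ZSp n m1 m2 => MbV (Mmat w.1) (w.2.2 k) i) := fun k i =>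
    ContDiff.sum fun j _ => (cM i j).mul (cB k j)
  have main : ContDiffAt ℂ 1 (psiFun τ) z := by
    refine ContDiffAt.prodMk ?_ ?_
    · refine contDiffAt_pi.2 fun k => ?_
      rcases hk : τ k with i | ij
      · simp only [psiFun, hk, Sum.elim_inl]
        refine contDiffAt_pi.2 fun i' => ?_
        simp only [Function.update_apply]
        by_cases hii : i' = i
        · simp only [hii, eq_self_iff_true, if_true]
          have hden : MbV (Mmat z.1) (z.2.2 k) i ≠ 0 := by
            have := hz k
            rw [hk] at this
            exact this
          exact ((ContDiff.sum fun i' _ =>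
            (cA k i').mul (cMb k i')).contDiffAt.neg).div (cMb k i).contDiffAt hden
        · simp only [hii, if_false]
          exact (cA k i').contDiffAt
      · simp only [psiFun, hk, Sum.elim_inr]
        exact (cArow k).contDiffAt
    · refine contDiffAt_pi.2 fun k => ?_
      rcases hk : τ k with i | ij
      · simp only [psiFun, hk, Sum.elim_inl]
        exact (cBrow k).contDiffAt
      · simp only [psiFun, hk, Sum.elim_inr]
        refine contDiffAt_pi.2 fun j' => ?_
        simp only [Function.update_apply]
        by_cases hjj : j' = ij.2
        · simp only [hjj, eq_self_iff_true, if_true]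
          have hden : Mmat z.1 ij.1 ij.2 ≠ 0 := by
            have := hz k
            rw [hk] at this
            exact this
          exact ((ContDiff.sum fun j _ =>
            (cM ij.1 j).mul (cB k j)).contDiffAt.neg).div (cM ij.1 ij.2).contDiffAt hden
        · simp only [hjj, if_false]
          exact (cB k j').contDiffAt
  exact main.restrict_scalars ℝ

lemma submodule_dimH_le (V : Submodule ℝ (ZSp n m1 m2)) :
    dimH (V : Set (ZSp n m1 m2)) ≤ (finrank ℝ V : ℝ≥0∞) := by
  have h1 : LipschitzWith 1 ((↑) : V → ZSp n m1 m2) := isometry_subtype_coe.lipschitz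
  have := h1.dimH_range_le
  rw [Subtype.range_coe] at this
  exact this.trans (by rw [Real.dimH_univ_eq_finrank])

lemma badSet_volume (hn : 2 * (m1 + m2) < n) : volume (badSet n m1 m2) = 0 := by
  refine measure_mono_null badSet_cover (measure_iUnion_null fun τ => ?_)
  have hdim : dimH (psiFun τ '' ((Wsub τ : Set (ZSp n m1 m2)) ∩ Uset τ))
      ≤ (finrank ℝ (Wsub τ) : ℝ≥0∞) := by
    refine le_trans (dimH_image_le_of_locally_lipschitzOn fun x hx => ?_) ?_
    · obtain ⟨C, t, ht, hlip⟩ := (psi_contDiffAt τ x hx.2).exists_lipschitzOnWith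
      exact ⟨C, t, nhdsWithin_le_nhds ht, hlip⟩
    · exact (dimH_mono Set.inter_subset_left).trans (submodule_dimH_le _)
  have hac : (volume : Measure (OmSp n m1 m2)) ≪ μH[finrank ℝ (OmSp n m1 m2)] :=
    absolutelyContinuous_isAddHaarMeasure _ _
  refine measure_zero_of_dimH_lt (d := (finrank ℝ (OmSp n m1 m2) : ℝ≥0)) ?_ ?_
  · exact_mod_cast hac
  · refine lt_of_le_of_lt hdim ?_
    exact_mod_cast Nat.cast_lt.2 (Wsub_finrank_lt hn τ)

end Defs

section Transfer
variable {n : ℕ} [NeZero n]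

noncomputable def colDFT {m : ℕ} : (ZMod n → Fin m → ℂ) ≃ₗ[ℂ] (ZMod n → Fin m → ℂ) where
  toFun D := fun k i => ZMod.dft (fun l => D l i) k
  invFun A := fun l i => (ZMod.dft (N := n)).symm (fun k => A k i) l
  map_add' D D' := by
    funext k i
    exact congrFun (map_add (ZMod.dft (N := n) (E := ℂ))
      (fun l => D l i) (fun l => D' l i)) k
  map_smul' c D := by
    funext k i
    exact congrFun (map_smul (ZMod.dft (N := n) (E := ℂ)) c (fun l => D l i)) k
  left_inv D := by
    funext l i
    exact congrFun (ZMod.dft.symm_apply_apply fun l' => D l' i) l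
  right_inv A := by
    funext k i
    exact congrFun (ZMod.dft.apply_symm_apply fun k' => A k' i) k

noncomputable def bigEquiv (n m1 m2 : ℕ) [NeZero n] :
    OmSp n m1 m2 ≃ₗ[ℂ] OmSp n m1 m2 :=
  colDFT.prodCongr colDFT

lemma transfer_null {m1 m2 : ℕ} {S : Set (OmSp n m1 m2)} (hS : volume S = 0) :
    volume {DE : OmSp n m1 m2 | bigEquiv n m1 m2 DE ∈ S} = 0 := by
  have heq : {DE : OmSp n m1 m2 | bigEquiv n m1 m2 DE ∈ S}
      = ((bigEquiv n m1 m2).restrictScalars ℝ) ⁻¹' S := rfl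
  rw [heq, Measure.addHaar_preimage_linearEquiv volume
    ((bigEquiv n m1 m2).restrictScalars ℝ) S, hS, mul_zero]

end Transfer

/-- Strong identifiability of blind deconvolution with subspace constraints:
if `n > 2(m1 + m2)`, then for Lebesgue-almost all `(D, E)`, all nonzero pairs `(x0, y0)`
are identifiable up to scaling. -/
theorem strong_identifiability_subspace (n m1 m2 : ℕ) [NeZero n]
    (hm1 : 0 < m1) (hm2 : 0 < m2) (hn : 2 * (m1 + m2) < n) :
    ∀ᵐ DE : (ZMod n → Fin m1 → ℂ) × (ZMod n → Fin m2 → ℂ),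
      ∀ x0 : Fin m1 → ℂ, x0 ≠ 0 → ∀ y0 : Fin m2 → ℂ, y0 ≠ 0 →
      ∀ x : Fin m1 → ℂ, ∀ y : Fin m2 → ℂ,
        cconv (mApply DE.1 x) (mApply DE.2 y) = cconv (mApply DE.1 x0) (mApply DE.2 y0) →
        ∃ σ : ℂ, σ ≠ 0 ∧ x = σ • x0 ∧ y = σ⁻¹ • y0 := by
  have hnull : volume {DE : OmSp n m1 m2 | bigEquiv n m1 m2 DE ∈ badSet n m1 m2} = 0 :=
    transfer_null (badSet_volume hn)
  have hae : ∀ᵐ DE : OmSp n m1 m2,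
      DE ∉ {DE : OmSp n m1 m2 | bigEquiv n m1 m2 DE ∈ badSet n m1 m2} :=
    measure_eq_zero_iff_ae_notMem.1 hnull
  filter_upwards [hae] with DE hDE
  intro x0 hx0 y0 hy0 x y hconv
  have hnotbad : bigEquiv n m1 m2 DE ∉ badSet n m1 m2 := hDE
  have hfreq : ∀ k : ZMod n,
      (∑ i, (bigEquiv n m1 m2 DE).1 k i * x i) * (∑ j, (bigEquiv n m1 m2 DE).2 k j * y j)
      = (∑ i, (bigEquiv n m1 m2 DE).1 k i * x0 i)
        * (∑ j, (bigEquiv n m1 m2 DE).2 k j * y0 j) := by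
    intro k
    have h1 : ZMod.dft (cconv (mApply DE.1 x) (mApply DE.2 y)) k
        = ZMod.dft (cconv (mApply DE.1 x0) (mApply DE.2 y0)) k :=
      congrArg (fun u => ZMod.dft u k) hconv
    rw [dft_cconv, dft_cconv, dft_mApply, dft_mApply, dft_mApply, dft_mApply] at h1
    exact h1
  have hQ : ∀ k : ZMod n, ∑ i, (bigEquiv n m1 m2 DE).1 k i
      * MbV (Mmat ((x, y), (x0, y0))) ((bigEquiv n m1 m2 DE).2 k) i = 0 := by
    intro k
    rw [Q_expand, hfreq k, _root_.sub_self]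
  have hM0 : Mmat ((x, y), (x0, y0)) = 0 := by
    by_contra hM
    exact hnotbad ⟨((x, y), (x0, y0)), hM, hQ⟩
  have hprod : ∀ i j, x i * y j = x0 i * y0 j := by
    intro i j
    have h := congrFun (congrFun hM0 i) j
    simpa [Mmat, sub_eq_zero] using h
  exact rank_one_factor hx0 hy0 hprod
end

section
/- Let m1, m2, s1, s2 be positive integers with s1 ≤ m1 and s2 ≤ m2, and let Ω_B = { x yᵀ : x ∈ ℂ^{m1}, y ∈ ℂ^{m2}, ‖x‖₀ ≤ s1, ‖y‖₀ ≤ s2, ‖x yᵀ‖_F ≤ 1 } ⊆ ℂ^{m1×m2}. Then the upper Minkowski dimension of Ω_B (with respect to the Frobenius norm) is at most 2(s1 + s2). -/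
open MeasureTheory Filter

/-- Covering number: the minimal number of closed balls of radius `ρ`
(with arbitrary centers) needed to cover `Ω`. -/
noncomputable def coveringNumber {X : Type*} [PseudoMetricSpace X] (Ω : Set X) (ρ : ℝ) : ℕ :=
  sInf {k : ℕ | ∃ C : Finset X, C.card = k ∧ Ω ⊆ ⋃ c ∈ C, Metric.closedBall c ρ}

/-- Upper Minkowski dimension: `limsup_{ρ → 0⁺} log N_Ω(ρ) / log (1/ρ)`. -/
noncomputable def upperMinkowskiDim {X : Type*} [PseudoMetricSpace X] (Ω : Set X) : ℝ :=
  Filter.limsup (fun ρ : ℝ => Real.log (coveringNumber Ω ρ) / Real.log (1 / ρ))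
    (nhdsWithin 0 (Set.Ioi 0))

/-- `‖x‖₀`, the number of nonzero entries of a vector. -/
noncomputable def l0 {m : ℕ} (x : Fin m → ℂ) : ℕ := (Function.support x).ncard


noncomputable def gridC (n : ℕ) : Finset ℂ :=
  (Finset.Icc (-(n:ℤ)) n ×ˢ Finset.Icc (-(n:ℤ)) n).image
    (fun k => ((k.1 : ℝ)/n : ℝ) + ((k.2 : ℝ)/n : ℝ) * Complex.I)

lemma gridC_card (n : ℕ) : (gridC n).card ≤ (2*n+1)^2 := by
  refine le_trans (Finset.card_image_le) ?_
  rw [Finset.card_product, Int.card_Icc]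
  have : ((n:ℤ) + 1 - -n).toNat = 2*n+1 := by omega
  rw [this, sq]

lemma round_real (n : ℕ) (hn : 0 < n) (t : ℝ) (ht : |t| ≤ 1) :
    ∃ k : ℤ, k ∈ Finset.Icc (-(n:ℤ)) n ∧ |t - (k:ℝ)/n| ≤ 1/n := by
  have hn' : (0:ℝ) < n := by exact_mod_cast hn
  refine ⟨⌊t * n⌋, ?_, ?_⟩
  · rw [Finset.mem_Icc]
    constructor
    · have : (-(n:ℝ)) ≤ t * n := by nlinarith [abs_le.1 ht]
      exact_mod_cast Int.le_floor.2 (by exact_mod_cast this)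
    · have h1 : t * n ≤ n := by nlinarith [abs_le.1 ht]
      have := Int.floor_le_floor (R := ℝ) h1
      simpa using this
  · have h1 := Int.floor_le (t * n)
    have h2 := Int.lt_floor_add_one (t * n)
    have e : t - (⌊t*n⌋:ℝ)/n = (t*n - ⌊t*n⌋)/n := by field_simp
    rw [e, abs_div, abs_of_pos hn']
    gcongr
    rw [abs_le]
    constructor <;> linarith

lemma reim_mk (r1 r2 : ℝ) : ((r1:ℂ) + (r2:ℂ) * Complex.I).re = r1 ∧
    ((r1:ℂ) + (r2:ℂ) * Complex.I).im = r2 := by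
  constructor <;> simp

lemma abs_mk_le (r1 r2 : ℝ) : ‖(r1:ℂ) + (r2:ℂ) * Complex.I‖ ≤ |r1| + |r2| := by
  refine le_trans (Complex.norm_le_abs_re_add_abs_im _) ?_
  rw [(reim_mk r1 r2).1, (reim_mk r1 r2).2]

lemma gridC_round (n : ℕ) (hn : 0 < n) (z : ℂ) (hz : ‖z‖ ≤ 1) :
    ∃ q ∈ gridC n, ‖z - q‖ ≤ 2/n := by
  have hre : |z.re| ≤ 1 := le_trans (Complex.abs_re_le_norm z) hz
  have him : |z.im| ≤ 1 := le_trans (Complex.abs_im_le_norm z) hz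
  obtain ⟨k1, hk1, e1⟩ := round_real n hn z.re hre
  obtain ⟨k2, hk2, e2⟩ := round_real n hn z.im him
  have hmem : ((k1, k2) : ℤ × ℤ) ∈ Finset.Icc (-(n:ℤ)) n ×ˢ Finset.Icc (-(n:ℤ)) n :=
    Finset.mem_product.2 ⟨hk1, hk2⟩
  refine ⟨_, Finset.mem_image_of_mem _ hmem, ?_⟩
  have hzq : z - (((k1:ℝ)/n : ℝ) + ((k2:ℝ)/n : ℝ) * Complex.I)
      = ((z.re - (k1:ℝ)/n : ℝ) : ℂ) + ((z.im - (k2:ℝ)/n : ℝ) : ℂ) * Complex.I := by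
    apply Complex.ext <;> simp
  rw [hzq]
  refine le_trans (abs_mk_le _ _) ?_
  have : (2:ℝ)/n = 1/n + 1/n := by ring
  rw [this]
  exact add_le_add e1 e2

lemma gridC_bound (n : ℕ) {q : ℂ} (hq : q ∈ gridC n) : ‖q‖ ≤ 2 := by
  obtain ⟨⟨k1, k2⟩, hk, rfl⟩ := Finset.mem_image.1 hq
  rw [Finset.mem_product, Finset.mem_Icc, Finset.mem_Icc] at hk
  by_cases hn : (n:ℝ) = 0
  · simp [hn]
  have hn' : (0:ℝ) < n := lt_of_le_of_ne (Nat.cast_nonneg n) (Ne.symm hn)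
  refine le_trans (abs_mk_le _ _) ?_
  have b1 : |((k1,k2).1:ℝ)/(n:ℝ)| ≤ 1 := by
    rw [abs_div, abs_of_pos hn', div_le_one hn', abs_le]
    exact ⟨by exact_mod_cast hk.1.1, by exact_mod_cast hk.1.2⟩
  have b2 : |((k1,k2).2:ℝ)/(n:ℝ)| ≤ 1 := by
    rw [abs_div, abs_of_pos hn', div_le_one hn', abs_le]
    exact ⟨by exact_mod_cast hk.2.1, by exact_mod_cast hk.2.2⟩
  linarith



noncomputable def vec {s m : ℕ} (σ : Fin s → Fin m) (a : Fin s → ℂ) : Fin m → ℂ :=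
  fun i => ∑ j, if σ j = i then a j else 0

lemma vec_sub {s m : ℕ} (σ : Fin s → Fin m) (a g : Fin s → ℂ) (i : Fin m) :
    vec σ a i - vec σ g i = vec σ (a - g) i := by
  unfold vec
  rw [← Finset.sum_sub_distrib]
  congr 1; ext j
  by_cases h : σ j = i <;> simp [h]

lemma vec_abs_le {s m : ℕ} (σ : Fin s → Fin m) (a : Fin s → ℂ) (c : ℝ)
    (h : ∀ j, ‖a j‖ ≤ c) (hc : 0 ≤ c) (i : Fin m) :
    ‖vec σ a i‖ ≤ s * c := by
  unfold vec
  refine le_trans (norm_sum_le _ _) ?_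
  calc ∑ j, ‖if σ j = i then a j else 0‖ ≤ ∑ _j : Fin s, c := by
        refine Finset.sum_le_sum fun j _ => ?_
        by_cases hj : σ j = i <;> simp [hj, h j, hc]
    _ = s * c := by simp [mul_comm]

lemma vec_eq {s m : ℕ} (σ : Fin s → Fin m) (hσ : Function.Injective σ)
    (x : Fin m → ℂ) (hx : Function.support x ⊆ Set.range σ) :
    vec σ (x ∘ σ) = x := by
  funext i
  unfold vec
  by_cases h : ∃ j, σ j = i
  · obtain ⟨j0, hj0⟩ := h
    rw [Finset.sum_eq_single j0]
    · simp [hj0]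
    · intro j _ hj
      have : σ j ≠ i := fun he => hj (hσ (he.trans hj0.symm))
      simp [this]
    · simp
  · have hxi : x i = 0 := by
      by_contra hne
      exact h (hx hne)
    rw [hxi]
    refine Finset.sum_eq_zero fun j _ => ?_
    have : σ j ≠ i := fun he => h ⟨j, he⟩
    simp [this]

/-- existence of an injective enumeration covering the support -/
lemma exists_sigma {s m : ℕ} (hsm : s ≤ m) (x : Fin m → ℂ) (hx : l0 x ≤ s) :
    ∃ σ : Fin s → Fin m, Function.Injective σ ∧ Function.support x ⊆ Set.range σ := by
  classical
  have hfin : (Function.support x).Finite := Set.toFinite _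
  set S : Finset (Fin m) := hfin.toFinset with hS
  have hcard : S.card ≤ s := by
    have : (Function.support x).ncard = S.card := Set.ncard_eq_toFinset_card _ hfin
    rw [← this]; exact hx
  obtain ⟨T, hST, hT⟩ := Finset.exists_superset_card_eq hcard (by simpa using hsm)
  set e := T.orderIsoOfFin hT
  refine ⟨fun j => (e j : Fin m), ?_, ?_⟩
  · intro a b hab
    have := e.injective (Subtype.ext hab)
    exact this
  · intro i hi
    have hiT : i ∈ T := hST ((Set.Finite.mem_toFinset hfin).2 hi)
    exact ⟨e.symm ⟨i, hiT⟩, by simp⟩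

lemma norm_sq_prod {m1 m2 : ℕ} (M : EuclideanSpace ℂ (Fin m1 × Fin m2))
    (x : Fin m1 → ℂ) (y : Fin m2 → ℂ) (hM : ∀ p, M p = x p.1 * y p.2) :
    ‖M‖^2 = (∑ i, ‖x i‖^2) * (∑ j, ‖y j‖^2) := by
  rw [EuclideanSpace.norm_eq, Real.sq_sqrt (Finset.sum_nonneg fun _ _ => by positivity)]
  calc ∑ p : Fin m1 × Fin m2, ‖M p‖^2
      = ∑ p : Fin m1 × Fin m2, ‖x p.1‖^2 * ‖y p.2‖^2 := by
        refine Finset.sum_congr rfl fun p _ => ?_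
        rw [hM p, norm_mul, mul_pow]
    _ = (∑ i, ‖x i‖^2) * (∑ j, ‖y j‖^2) := by
        rw [Finset.sum_mul_sum, Fintype.sum_prod_type]

lemma represent {m1 m2 s1 s2 : ℕ} (hs1m : s1 ≤ m1) (hs2m : s2 ≤ m2)
    (M : EuclideanSpace ℂ (Fin m1 × Fin m2))
    (hM : ∃ x : Fin m1 → ℂ, ∃ y : Fin m2 → ℂ, l0 x ≤ s1 ∧ l0 y ≤ s2 ∧
      (∀ p : Fin m1 × Fin m2, M p = x p.1 * y p.2) ∧ ‖M‖ ≤ 1) :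
    ∃ σ : Fin s1 → Fin m1, ∃ τ : Fin s2 → Fin m2, ∃ a : Fin s1 → ℂ, ∃ b : Fin s2 → ℂ,
      (∀ j, ‖a j‖ ≤ 1) ∧ (∀ j, ‖b j‖ ≤ 1) ∧
      (∀ p : Fin m1 × Fin m2, M p = vec σ a p.1 * vec τ b p.2) := by
  obtain ⟨x, y, hx, hy, hMp, hMn⟩ := hM
  obtain ⟨σ, hσinj, hσsupp⟩ := exists_sigma hs1m x hx
  obtain ⟨τ, hτinj, hτsupp⟩ := exists_sigma hs2m y hy
  by_cases hxy : x = 0 ∨ y = 0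
  · refine ⟨σ, τ, 0, 0, by simp, by simp, fun p => ?_⟩
    have hz : x p.1 * y p.2 = 0 := by
      rcases hxy with h | h <;> simp [h]
    have hv : ∀ i, vec σ (0 : Fin s1 → ℂ) i = 0 := fun i => by
      unfold vec; simp
    rw [hMp p, hz, hv]
    simp
  push_neg at hxy
  set c : ℝ := Real.sqrt (∑ i, ‖x i‖^2) with hc
  have hcsq : c^2 = ∑ i, ‖x i‖^2 :=
    Real.sq_sqrt (Finset.sum_nonneg fun _ _ => by positivity)
  have hcpos : 0 < c := by
    obtain ⟨i, hi⟩ := Function.ne_iff.1 hxy.1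
    have hpos : (0:ℝ) < ‖x i‖^2 := pow_pos (norm_pos_iff.2 hi) 2
    have hsum : (0:ℝ) < ∑ i, ‖x i‖^2 :=
      lt_of_lt_of_le hpos (Finset.single_le_sum (f := fun i => ‖x i‖^2)
        (fun j _ => by positivity) (Finset.mem_univ i))
    exact Real.sqrt_pos.2 hsum
  have hxc : ∀ i, ‖x i‖ ≤ c := by
    intro i
    have h1 : ‖x i‖^2 ≤ ∑ i, ‖x i‖^2 :=
      Finset.single_le_sum (f := fun i => ‖x i‖^2)
        (fun j _ => by positivity) (Finset.mem_univ i)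
    have := Real.sqrt_le_sqrt h1
    rwa [Real.sqrt_sq (by positivity)] at this
  have hprod : c^2 * (∑ j, ‖y j‖^2) ≤ 1 := by
    rw [hcsq, ← norm_sq_prod M x y hMp]
    nlinarith [norm_nonneg M]
  have hyc : ∀ j, c * ‖y j‖ ≤ 1 := by
    intro j
    have h1 : ‖y j‖^2 ≤ ∑ j, ‖y j‖^2 :=
      Finset.single_le_sum (f := fun j => ‖y j‖^2)
        (fun k _ => by positivity) (Finset.mem_univ j)
    nlinarith [norm_nonneg (y j), hcpos.le]
  set x' : Fin m1 → ℂ := fun i => x i / c with hx'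
  set y' : Fin m2 → ℂ := fun j => c * y j with hy'
  have hcC : (c : ℂ) ≠ 0 := by exact_mod_cast hcpos.ne'
  have hsx' : Function.support x' ⊆ Set.range σ := by
    refine subset_trans ?_ hσsupp
    intro i hi
    simp only [Function.mem_support, hx'] at hi ⊢
    intro h0; exact hi (by rw [h0]; simp)
  have hsy' : Function.support y' ⊆ Set.range τ := by
    refine subset_trans ?_ hτsupp
    intro j hj
    simp only [Function.mem_support, hy'] at hj ⊢
    intro h0; exact hj (by rw [h0]; simp)
  refine ⟨σ, τ, x' ∘ σ, y' ∘ τ, ?_, ?_, ?_⟩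
  · intro j
    simp only [Function.comp_apply, hx', norm_div, Complex.norm_real, Real.norm_eq_abs,
      abs_of_pos hcpos]
    rw [div_le_one hcpos]
    exact hxc _
  · intro j
    simp only [Function.comp_apply, hy', norm_mul, Complex.norm_real, Real.norm_eq_abs, abs_of_pos hcpos]
    exact hyc _
  · intro p
    rw [vec_eq σ hσinj x' hsx', vec_eq τ hτinj y' hsy', hMp p, hx', hy']
    field_simp
noncomputable def Fmap {m1 m2 s1 s2 : ℕ} (σ : Fin s1 → Fin m1) (τ : Fin s2 → Fin m2)
    (a : Fin s1 → ℂ) (b : Fin s2 → ℂ) : EuclideanSpace ℂ (Fin m1 × Fin m2) :=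
  WithLp.toLp 2 (fun p => vec σ a p.1 * vec τ b p.2)

lemma Fmap_dist {m1 m2 s1 s2 : ℕ} (σ : Fin s1 → Fin m1) (τ : Fin s2 → Fin m2)
    (a g : Fin s1 → ℂ) (b h : Fin s2 → ℂ) (ε : ℝ) (hε : 0 ≤ ε)
    (ha : ∀ j, ‖a j‖ ≤ 1) (hb : ∀ j, ‖b j‖ ≤ 1)
    (hg : ∀ j, ‖g j‖ ≤ 2)
    (hag : ∀ j, ‖a j - g j‖ ≤ ε) (hbh : ∀ j, ‖b j - h j‖ ≤ ε) :
    dist (Fmap σ τ a b) (Fmap σ τ g h) ≤ (m1*m2) * (3*s1*s2*ε) := by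
  have hK : (0:ℝ) ≤ 3*(s1:ℝ)*s2*ε := by positivity
  have key : ∀ p : Fin m1 × Fin m2,
      dist (Fmap σ τ a b p) (Fmap σ τ g h p) ≤ 3*s1*s2*ε := by
    intro p
    rw [Complex.dist_eq]
    have e : Fmap σ τ a b p - Fmap σ τ g h p
        = (vec σ a p.1 - vec σ g p.1) * vec τ b p.2
          + vec σ g p.1 * (vec τ b p.2 - vec τ h p.2) := by
      show vec σ a p.1 * vec τ b p.2 - vec σ g p.1 * vec τ h p.2 = _
      ring
    rw [e]
    refine le_trans (norm_add_le _ _) ?_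
    rw [norm_mul, norm_mul]
    have h1 : ‖vec σ a p.1 - vec σ g p.1‖ ≤ s1 * ε := by
      rw [vec_sub]; exact vec_abs_le _ _ _ (fun j => hag j) hε _
    have h2 : ‖vec τ b p.2‖ ≤ s2 * 1 :=
      vec_abs_le _ _ _ hb zero_le_one _
    have h3 : ‖vec σ g p.1‖ ≤ s1 * 2 :=
      vec_abs_le _ _ _ hg (by norm_num) _
    have h4 : ‖vec τ b p.2 - vec τ h p.2‖ ≤ s2 * ε := by
      rw [vec_sub]; exact vec_abs_le _ _ _ (fun j => hbh j) hε _
    have n1 := norm_nonneg (vec σ a p.1 - vec σ g p.1)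
    have n2 := norm_nonneg (vec τ b p.2)
    have n3 := norm_nonneg (vec σ g p.1)
    have n4 := norm_nonneg (vec τ b p.2 - vec τ h p.2)
    nlinarith [norm_nonneg (vec σ a p.1), Nat.cast_nonneg (α := ℝ) s1,
      Nat.cast_nonneg (α := ℝ) s2]
  rw [EuclideanSpace.dist_eq]
  have hsum : ∑ p : Fin m1 × Fin m2, dist (Fmap σ τ a b p) (Fmap σ τ g h p) ^ 2
      ≤ (m1*m2) * (3*s1*s2*ε)^2 := by
    calc ∑ p : Fin m1 × Fin m2, dist (Fmap σ τ a b p) (Fmap σ τ g h p) ^ 2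
        ≤ ∑ _p : Fin m1 × Fin m2, (3*(s1:ℝ)*s2*ε)^2 := by
          refine Finset.sum_le_sum fun p _ => ?_
          have := key p
          nlinarith [@dist_nonneg _ _ (Fmap σ τ a b p) (Fmap σ τ g h p)]
      _ = (m1*m2) * (3*s1*s2*ε)^2 := by
          simp [Finset.card_univ, mul_comm]
  have hfin : ((m1:ℝ)*m2) * (3*s1*s2*ε)^2 ≤ ((m1*m2) * (3*s1*s2*ε))^2 := by
    have h1 : (1:ℝ) ≤ (m1:ℝ)*m2 ∨ (m1:ℝ)*m2 = 0 := by
      rcases Nat.eq_zero_or_pos (m1*m2) with h | h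
      · right; exact_mod_cast congrArg (Nat.cast : ℕ → ℝ) h
      · left; exact_mod_cast h
    rcases h1 with h | h
    · nlinarith
    · rw [show ((m1:ℝ)*m2) = 0 from h]; simp
  refine le_trans (Real.sqrt_le_sqrt (le_trans hsum hfin)) ?_
  rw [Real.sqrt_sq (by positivity)]
lemma cover_bound {m1 m2 s1 s2 : ℕ} (hs1m : s1 ≤ m1) (hs2m : s2 ≤ m2)
    (n : ℕ) (hn : 0 < n) (ρ : ℝ)
    (hρ : ((m1:ℝ)*m2) * (3*s1*s2*(2/n)) ≤ ρ) :
    coveringNumber {M : EuclideanSpace ℂ (Fin m1 × Fin m2) |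
        ∃ x : Fin m1 → ℂ, ∃ y : Fin m2 → ℂ, l0 x ≤ s1 ∧ l0 y ≤ s2 ∧
          (∀ p : Fin m1 × Fin m2, M p = x p.1 * y p.2) ∧ ‖M‖ ≤ 1} ρ
      ≤ m1^s1 * m2^s2 * (2*n+1)^(2*(s1+s2)) := by
  classical
  set D := (Finset.univ : Finset (Fin s1 → Fin m1)) ×ˢ
    ((Finset.univ : Finset (Fin s2 → Fin m2)) ×ˢ
    ((Fintype.piFinset fun _ : Fin s1 => gridC n) ×ˢ
     (Fintype.piFinset fun _ : Fin s2 => gridC n))) with hD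
  set C := D.image (fun t => Fmap t.1 t.2.1 t.2.2.1 t.2.2.2) with hC
  have hcov : {M : EuclideanSpace ℂ (Fin m1 × Fin m2) |
        ∃ x : Fin m1 → ℂ, ∃ y : Fin m2 → ℂ, l0 x ≤ s1 ∧ l0 y ≤ s2 ∧
          (∀ p : Fin m1 × Fin m2, M p = x p.1 * y p.2) ∧ ‖M‖ ≤ 1}
      ⊆ ⋃ c ∈ C, Metric.closedBall c ρ := by
    intro M hM
    obtain ⟨σ, τ, a, b, ha, hb, hrep⟩ := represent hs1m hs2m M hM
    have hMeq : M = Fmap σ τ a b := by ext p; exact hrep p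
    choose g hg1 hg2 using fun j => gridC_round n hn (a j) (ha j)
    choose h hh1 hh2 using fun j => gridC_round n hn (b j) (hb j)
    have hmem : Fmap σ τ g h ∈ C := by
      rw [hC]
      refine Finset.mem_image.2 ⟨(σ, τ, g, h), ?_, rfl⟩
      rw [hD]
      refine Finset.mem_product.2 ⟨Finset.mem_univ _, Finset.mem_product.2
        ⟨Finset.mem_univ _, Finset.mem_product.2 ⟨?_, ?_⟩⟩⟩
      · exact Fintype.mem_piFinset.2 fun j => hg1 j
      · exact Fintype.mem_piFinset.2 fun j => hh1 j
    refine Set.mem_iUnion₂.2 ⟨Fmap σ τ g h, hmem, Metric.mem_closedBall.2 ?_⟩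
    rw [hMeq]
    refine le_trans (Fmap_dist σ τ a g b h (2/n) (by positivity) ha hb
      (fun j => gridC_bound n (hg1 j)) hg2 hh2) hρ
  refine le_trans (Nat.sInf_le ⟨C, rfl, hcov⟩) ?_
  calc C.card ≤ D.card := Finset.card_image_le
    _ ≤ m1^s1 * m2^s2 * (2*n+1)^(2*(s1+s2)) := by
        rw [hD, Finset.card_product, Finset.card_product, Finset.card_product,
          Finset.card_univ, Finset.card_univ, Fintype.card_fun, Fintype.card_fun,
          Fintype.card_piFinset, Fintype.card_piFinset]
        simp only [Fintype.card_fin, Finset.prod_const, Finset.card_univ]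
        have h1 : (gridC n).card ^ s1 ≤ ((2*n+1)^2)^s1 :=
          Nat.pow_le_pow_left (gridC_card n) _
        have h2 : (gridC n).card ^ s2 ≤ ((2*n+1)^2)^s2 :=
          Nat.pow_le_pow_left (gridC_card n) _
        calc m1^s1 * (m2^s2 * ((gridC n).card ^ s1 * (gridC n).card ^ s2))
            ≤ m1^s1 * (m2^s2 * (((2*n+1)^2)^s1 * ((2*n+1)^2)^s2)) := by
              exact Nat.mul_le_mul_left _ (Nat.mul_le_mul_left _ (Nat.mul_le_mul h1 h2))
          _ = m1^s1 * m2^s2 * (2*n+1)^(2*(s1+s2)) := by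
              rw [← pow_mul, ← pow_mul, ← pow_add]
              ring_nf

lemma final_step {X : Type*} [PseudoMetricSpace X] (Ω : Set X) (d : ℕ) (A Cc : ℝ)
    (hA : 1 ≤ A) (hC : 1 ≤ Cc)
    (hbound : ∀ ρ : ℝ, 0 < ρ → ρ < 1 → (coveringNumber Ω ρ : ℝ) ≤ A * (Cc/ρ)^d) :
    upperMinkowskiDim Ω ≤ d := by
  set B : ℝ := Real.log A + d * Real.log Cc with hB
  have hBnn : 0 ≤ B := by
    have := Real.log_nonneg hA
    have := Real.log_nonneg hC
    positivity
  set g : ℝ → ℝ := fun ρ => B / Real.log (1/ρ) + d with hg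
  have hIoo : Set.Ioo (0:ℝ) (1/2) ∈ nhdsWithin (0:ℝ) (Set.Ioi 0) :=
    Ioo_mem_nhdsGT_of_mem (by norm_num)
  have hfg : ∀ ρ ∈ Set.Ioo (0:ℝ) (1/2),
      Real.log (coveringNumber Ω ρ) / Real.log (1/ρ) ≤ g ρ := by
    intro ρ hρ
    obtain ⟨hρ0, hρ1⟩ := hρ
    have hρ1' : ρ < 1 := by linarith
    have hlog : 0 < Real.log (1/ρ) := Real.log_pos (by rw [lt_div_iff₀ hρ0]; linarith)
    have hlogN : Real.log (coveringNumber Ω ρ) ≤ B + d * Real.log (1/ρ) := by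
      have hrhs : Real.log (A * (Cc/ρ)^d) = B + d * Real.log (1/ρ) := by
        rw [Real.log_mul (by linarith) (by positivity), Real.log_pow, Real.log_div
          (by linarith) (by linarith), hB]
        rw [Real.log_div one_ne_zero (by linarith), Real.log_one]
        ring
      rcases Nat.eq_zero_or_pos (coveringNumber Ω ρ) with h0 | h0
      · rw [h0]
        simp only [Nat.cast_zero, Real.log_zero]
        have : 0 ≤ Real.log (1/ρ) := hlog.le
        positivity
      · have h1 : (1:ℝ) ≤ (coveringNumber Ω ρ : ℝ) := by exact_mod_cast h0
        rw [← hrhs]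
        exact Real.log_le_log (by linarith) (hbound ρ hρ0 hρ1')
    rw [hg]
    have : Real.log (coveringNumber Ω ρ) / Real.log (1/ρ)
        ≤ (B + d * Real.log (1/ρ)) / Real.log (1/ρ) := by gcongr
    refine le_trans this ?_
    rw [add_div, mul_div_assoc, div_self hlog.ne', mul_one]
  have hgtend : Tendsto g (nhdsWithin (0:ℝ) (Set.Ioi 0)) (nhds (d:ℝ)) := by
    have h1 : Tendsto (fun ρ : ℝ => Real.log (1/ρ)) (nhdsWithin (0:ℝ) (Set.Ioi 0)) atTop := by
      refine Real.tendsto_log_atTop.comp ?_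
      have := tendsto_inv_nhdsGT_zero (𝕜 := ℝ)
      refine this.congr fun x => ?_
      rw [one_div]
    have h2 : Tendsto (fun ρ : ℝ => B / Real.log (1/ρ)) (nhdsWithin (0:ℝ) (Set.Ioi 0))
        (nhds 0) := Tendsto.div_atTop tendsto_const_nhds h1
    have h3 := h2.add_const (d:ℝ)
    rwa [zero_add] at h3
  have hcob : IsCoboundedUnder (· ≤ ·) (nhdsWithin (0:ℝ) (Set.Ioi 0))
      (fun ρ : ℝ => Real.log (coveringNumber Ω ρ) / Real.log (1/ρ)) := by
    refine IsBoundedUnder.isCoboundedUnder_le (⟨0, ?_⟩)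
    rw [eventually_map]
    filter_upwards [hIoo] with ρ hρ
    have hlog : 0 < Real.log (1/ρ) := Real.log_pos (by rw [lt_div_iff₀ hρ.1]; linarith [hρ.2])
    have hlogN : 0 ≤ Real.log (coveringNumber Ω ρ) := by
      rcases Nat.eq_zero_or_pos (coveringNumber Ω ρ) with h0 | h0
      · rw [h0]; simp
      · exact Real.log_nonneg (by exact_mod_cast h0)
    positivity
  have hbdd : IsBoundedUnder (· ≤ ·) (nhdsWithin (0:ℝ) (Set.Ioi 0)) g :=
    hgtend.isBoundedUnder_le
  have hle : (fun ρ : ℝ => Real.log (coveringNumber Ω ρ) / Real.log (1/ρ))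
      ≤ᶠ[nhdsWithin (0:ℝ) (Set.Ioi 0)] g := by
    filter_upwards [hIoo] with ρ hρ using hfg ρ hρ
  calc upperMinkowskiDim Ω ≤ limsup g (nhdsWithin (0:ℝ) (Set.Ioi 0)) :=
        limsup_le_limsup hle hcob hbdd
    _ = d := hgtend.limsup_eq

/-- The set of rank-one matrices `x yᵀ` with `‖x‖₀ ≤ s1`, `‖y‖₀ ≤ s2` and `‖x yᵀ‖_F ≤ 1`
has upper Minkowski dimension (w.r.t. the Frobenius norm) at most `2(s1 + s2)`. -/
theorem upper_minkowski_dim_sparse_rank_one (m1 m2 s1 s2 : ℕ)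
    (hm1 : 0 < m1) (hm2 : 0 < m2) (hs1 : 0 < s1) (hs2 : 0 < s2)
    (hs1m : s1 ≤ m1) (hs2m : s2 ≤ m2) :
    upperMinkowskiDim {M : EuclideanSpace ℂ (Fin m1 × Fin m2) |
        ∃ x : Fin m1 → ℂ, ∃ y : Fin m2 → ℂ, l0 x ≤ s1 ∧ l0 y ≤ s2 ∧
          (∀ p : Fin m1 × Fin m2, M p = x p.1 * y p.2) ∧ ‖M‖ ≤ 1}
      ≤ 2 * ((s1 : ℝ) + s2) := by
  classical
  set d : ℕ := 2 * (s1 + s2) with hd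
  set Lc : ℝ := 6 * (m1:ℝ) * m2 * s1 * s2 with hLc
  have hLcpos : 0 < Lc := by
    rw [hLc]
    have h1 : (0:ℝ) < m1 := by exact_mod_cast hm1
    have h2 : (0:ℝ) < m2 := by exact_mod_cast hm2
    have h3 : (0:ℝ) < s1 := by exact_mod_cast hs1
    have h4 : (0:ℝ) < s2 := by exact_mod_cast hs2
    positivity
  set A : ℝ := ((m1^s1 * m2^s2 : ℕ) : ℝ) with hA
  have hA1 : 1 ≤ A := by
    rw [hA]
    exact_mod_cast Nat.one_le_iff_ne_zero.2 (by positivity)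
  set Cc : ℝ := 2 * Lc + 3 with hCc
  have hCc1 : 1 ≤ Cc := by rw [hCc]; linarith
  have hbound : ∀ ρ : ℝ, 0 < ρ → ρ < 1 →
      (coveringNumber {M : EuclideanSpace ℂ (Fin m1 × Fin m2) |
        ∃ x : Fin m1 → ℂ, ∃ y : Fin m2 → ℂ, l0 x ≤ s1 ∧ l0 y ≤ s2 ∧
          (∀ p : Fin m1 × Fin m2, M p = x p.1 * y p.2) ∧ ‖M‖ ≤ 1} ρ : ℝ)
        ≤ A * (Cc/ρ)^d := by
    intro ρ hρ0 hρ1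
    set n : ℕ := ⌈Lc/ρ⌉₊ with hn
    have hnpos : 0 < n := Nat.ceil_pos.2 (div_pos hLcpos hρ0)
    have hnR : (0:ℝ) < n := by exact_mod_cast hnpos
    have hnge : Lc/ρ ≤ (n:ℝ) := Nat.le_ceil _
    have hρ' : ((m1:ℝ)*m2) * (3*s1*s2*(2/n)) ≤ ρ := by
      have he : ((m1:ℝ)*m2) * (3*s1*s2*(2/n)) = Lc/n := by
        rw [hLc]; field_simp; ring
      rw [he, div_le_iff₀ hnR]
      have := mul_le_mul_of_nonneg_left hnge hρ0.le
      rw [mul_div_cancel₀ _ hρ0.ne'] at this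
      linarith
    have hN := cover_bound hs1m hs2m n hnpos ρ hρ'
    have hNR : (coveringNumber {M : EuclideanSpace ℂ (Fin m1 × Fin m2) |
        ∃ x : Fin m1 → ℂ, ∃ y : Fin m2 → ℂ, l0 x ≤ s1 ∧ l0 y ≤ s2 ∧
          (∀ p : Fin m1 × Fin m2, M p = x p.1 * y p.2) ∧ ‖M‖ ≤ 1} ρ : ℝ)
        ≤ A * ((2*(n:ℝ)+1))^d := by
      have := (Nat.cast_le (α := ℝ)).2 hN
      push_cast at this ⊢
      rw [hA]
      push_cast
      convert this using 2
    refine le_trans hNR ?_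
    have hn1 : (2*(n:ℝ)+1) ≤ Cc/ρ := by
      have hceil : (n:ℝ) < Lc/ρ + 1 := Nat.ceil_lt_add_one (div_pos hLcpos hρ0).le
      have h3ρ : (3:ℝ) ≤ 3/ρ := by
        rw [le_div_iff₀ hρ0]; nlinarith
      have : Cc/ρ = 2*(Lc/ρ) + 3/ρ := by rw [hCc, add_div, mul_div_assoc]
      rw [this]
      nlinarith
    have h2n : (0:ℝ) ≤ 2*(n:ℝ)+1 := by positivity
    gcongr
  have := final_step {M : EuclideanSpace ℂ (Fin m1 × Fin m2) |
        ∃ x : Fin m1 → ℂ, ∃ y : Fin m2 → ℂ, l0 x ≤ s1 ∧ l0 y ≤ s2 ∧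
          (∀ p : Fin m1 × Fin m2, M p = x p.1 * y p.2) ∧ ‖M‖ ≤ 1} d A Cc hA1 hCc1 hbound
  refine le_trans this ?_
  rw [hd]
  push_cast
  ring_nf
  exact le_refl _
end

section
/- Let Ω_X ⊆ ℂ^{m1} and Ω_Y ⊆ ℂ^{m2} be nonempty bounded sets (Euclidean norm), and let Ω_M = { x yᵀ : x ∈ Ω_X, y ∈ Ω_Y } ⊆ ℂ^{m1×m2} (Frobenius norm). Then the upper Minkowski dimension of Ω_M is at most the sum of the upper Minkowski dimensions of Ω_X and Ω_Y. -/
open MeasureTheory Filter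

section Aux

lemma coveringNumber_le_card {X : Type*} [PseudoMetricSpace X] {Ω : Set X} {ρ : ℝ}
    (C : Finset X) (h : Ω ⊆ ⋃ c ∈ C, Metric.closedBall c ρ) :
    coveringNumber Ω ρ ≤ C.card :=
  Nat.sInf_le ⟨C, rfl, h⟩

lemma complex_norm_sq' (z : ℂ) : ‖z‖^2 = (z.re)^2 + (z.im)^2 := by
  rw [Complex.sq_norm, Complex.normSq_apply]; ring

lemma euclidean_coord_norm_le {m : ℕ} (x : EuclideanSpace ℂ (Fin m)) (i : Fin m) :
    ‖x i‖ ≤ ‖x‖ := by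
  rw [EuclideanSpace.norm_eq]
  have : ‖x i‖^2 ≤ ∑ j, ‖x j‖^2 :=
    Finset.single_le_sum (f := fun j => ‖x j‖^2) (fun j _ => by positivity) (Finset.mem_univ i)
  calc ‖x i‖ = Real.sqrt (‖x i‖^2) := by rw [Real.sqrt_sq (norm_nonneg _)]
  _ ≤ _ := Real.sqrt_le_sqrt this

lemma grid_cover (m : ℕ) (Ω : Set (EuclideanSpace ℂ (Fin m))) (R : ℝ)
    (hsub : Ω ⊆ Metric.closedBall 0 R) {σ : ℝ} (hσ : 0 < σ) :
    ∃ C : Finset (EuclideanSpace ℂ (Fin m)),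
      C.card ≤ ((2 * (⌈R * (m+1) / σ⌉₊ + 1) + 1)^2)^m ∧
      Ω ⊆ ⋃ c ∈ C, Metric.closedBall c σ := by
  classical
  set n : ℕ := ⌈R * (m+1) / σ⌉₊ + 1 with hn
  set δ : ℝ := σ / (m+1) with hδ
  have hδpos : 0 < δ := by positivity
  have hδσ : δ * (m+1) = σ := by rw [hδ]; field_simp
  set G : Finset ℂ := ((Finset.Icc (-(n:ℤ)) n) ×ˢ (Finset.Icc (-(n:ℤ)) n)).image
    (fun ab => (δ:ℂ) * ((ab.1 : ℝ) + (ab.2 : ℝ) * Complex.I)) with hG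
  have hIcc : (Finset.Icc (-(n:ℤ)) n).card = 2*n+1 := by rw [Int.card_Icc]; omega
  have hGcard : G.card ≤ (2*n+1)^2 := by
    calc G.card ≤ ((Finset.Icc (-(n:ℤ)) n) ×ˢ (Finset.Icc (-(n:ℤ)) n)).card :=
          Finset.card_image_le
    _ = (Finset.Icc (-(n:ℤ)) n).card * (Finset.Icc (-(n:ℤ)) n).card := Finset.card_product _ _
    _ = (2*n+1)^2 := by rw [hIcc, sq]
  refine ⟨(Fintype.piFinset fun _ : Fin m => G).image ⇑(WithLp.equiv 2 (Fin m → ℂ)).symm, ?_, ?_⟩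
  · calc _ ≤ (Fintype.piFinset fun _ : Fin m => G).card := Finset.card_image_le
    _ = ∏ _i : Fin m, G.card := Fintype.card_piFinset _
    _ ≤ ∏ _i : Fin m, (2*n+1)^2 := Finset.prod_le_prod (fun _ _ => Nat.zero_le _)
        (fun _ _ => hGcard)
    _ = ((2*n+1)^2)^m := by simp
  · intro x hx
    have hxR : ‖x‖ ≤ R := by simpa using hsub hx
    have hcoord : ∀ i, ‖x i‖ ≤ R := fun i => (euclidean_coord_norm_le x i).trans hxR
    set cfun : Fin m → ℂ := fun i =>
      (δ:ℂ) * ((round ((x i).re/δ) : ℝ) + (round ((x i).im/δ) : ℝ) * Complex.I) with hcfun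
    have hRδ : R * (m+1) / σ = R / δ := by rw [hδ]; field_simp
    have habs : ∀ t : ℝ, |t| ≤ R → round (t/δ) ∈ Finset.Icc (-(n:ℤ)) n := by
      intro t ht
      have harg : |t/δ| ≤ R * (m+1) / σ := by
        rw [hRδ, abs_div, abs_of_pos hδpos]
        exact div_le_div_of_nonneg_right ht hδpos.le |>.trans_eq rfl
      have h1 : |(round (t/δ) : ℝ)| ≤ |t/δ| + 1/2 := by
        have hr := abs_sub_round (t/δ)
        calc |(round (t/δ) : ℝ)| ≤ |(round (t/δ) : ℝ) - t/δ| + |t/δ| := by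
              simpa using abs_add_le ((round (t/δ) : ℝ) - t/δ) (t/δ)
        _ ≤ 1/2 + |t/δ| := by rw [abs_sub_comm]; linarith
        _ = |t/δ| + 1/2 := by ring
      have h2 : |t/δ| ≤ (⌈R * (m+1) / σ⌉₊ : ℝ) := harg.trans (Nat.le_ceil _)
      have h3 : |(round (t/δ) : ℝ)| ≤ (n : ℝ) := by rw [hn]; push_cast; linarith
      have h4 : |round (t/δ)| ≤ (n : ℤ) := by
        exact_mod_cast (by rwa [← Int.cast_abs] at h3 : ((|round (t/δ)| : ℤ) : ℝ) ≤ (n:ℝ))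
      rw [Finset.mem_Icc]
      rw [abs_le] at h4
      exact h4
    have hmem : cfun ∈ Fintype.piFinset fun _ : Fin m => G := by
      rw [Fintype.mem_piFinset]
      intro i
      rw [hG, Finset.mem_image]
      refine ⟨(round ((x i).re/δ), round ((x i).im/δ)), ?_, rfl⟩
      rw [Finset.mem_product]
      have hnorm : ‖x i‖ ≤ R := by
        exact hcoord i
      exact ⟨habs _ ((Complex.abs_re_le_norm _).trans hnorm),
             habs _ ((Complex.abs_im_le_norm _).trans hnorm)⟩
    set c : EuclideanSpace ℂ (Fin m) := (WithLp.equiv 2 (Fin m → ℂ)).symm cfun with hc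
    have hci : ∀ i, c i = cfun i := fun i => rfl
    refine Set.mem_iUnion₂.mpr ⟨c, Finset.mem_image_of_mem _ hmem, ?_⟩
    rw [Metric.mem_closedBall, dist_eq_norm]
    have hhalf : ∀ t : ℝ, |t - δ * round (t/δ)| ≤ δ/2 := by
      intro t
      have heq : t - δ * round (t/δ) = δ * (t/δ - round (t/δ)) := by field_simp
      rw [heq, abs_mul, abs_of_pos hδpos]
      have := abs_sub_round (t/δ)
      nlinarith
    have key : ∀ i, ‖x i - c i‖^2 ≤ δ^2 := by
      intro i
      have hre : (x i - c i).re = (x i).re - δ * (round ((x i).re/δ) : ℝ) := by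
        rw [hci]; simp [hcfun]
      have him : (x i - c i).im = (x i).im - δ * (round ((x i).im/δ) : ℝ) := by
        rw [hci]; simp [hcfun]
      rw [complex_norm_sq', hre, him]
      have h1 := hhalf (x i).re
      have h2 := hhalf (x i).im
      have a1 := abs_le.mp h1
      have a2 := abs_le.mp h2
      nlinarith [hδpos.le]
    have hsub' : ∀ i, (x - c) i = x i - c i := fun i => rfl
    rw [EuclideanSpace.norm_eq]
    have hsum : ∑ i, ‖(x - c) i‖^2 ≤ (m:ℝ) * δ^2 := by
      calc ∑ i, ‖(x - c) i‖^2 ≤ ∑ _i : Fin m, δ^2 :=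
            Finset.sum_le_sum (fun i _ => by rw [hsub' i]; exact key i)
      _ = m * δ^2 := by simp [Finset.sum_const]
    have hmδ : (m:ℝ) * δ^2 ≤ σ^2 := by
      have hmn : (0:ℝ) ≤ (m:ℝ) := Nat.cast_nonneg m
      nlinarith [sq_nonneg δ, hδσ]
    calc Real.sqrt (∑ i, ‖(x-c) i‖^2) ≤ Real.sqrt (σ^2) := Real.sqrt_le_sqrt (hsum.trans hmδ)
    _ = σ := Real.sqrt_sq hσ.le

lemma exists_cover_attained (m : ℕ) (Ω : Set (EuclideanSpace ℂ (Fin m)))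
    (hbd : Bornology.IsBounded Ω) {σ : ℝ} (hσ : 0 < σ) :
    ∃ C : Finset (EuclideanSpace ℂ (Fin m)),
      C.card = coveringNumber Ω σ ∧ Ω ⊆ ⋃ c ∈ C, Metric.closedBall c σ := by
  obtain ⟨R, hR⟩ := hbd.subset_closedBall 0
  obtain ⟨C, -, hC⟩ := grid_cover m Ω R hR hσ
  have hne : {k : ℕ | ∃ C : Finset (EuclideanSpace ℂ (Fin m)),
      C.card = k ∧ Ω ⊆ ⋃ c ∈ C, Metric.closedBall c σ}.Nonempty := ⟨C.card, C, rfl, hC⟩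
  obtain ⟨C', hcard, hcov⟩ := Nat.sInf_mem hne
  exact ⟨C', hcard, hcov⟩

lemma coveringNumber_pos {X : Type*} [PseudoMetricSpace X] {Ω : Set X} {σ : ℝ}
    (hne : Ω.Nonempty) (C : Finset X) (hcard : C.card = coveringNumber Ω σ)
    (hcov : Ω ⊆ ⋃ c ∈ C, Metric.closedBall c σ) : 0 < coveringNumber Ω σ := by
  rw [← hcard, Finset.card_pos]
  obtain ⟨x, hx⟩ := hne
  obtain ⟨c, hc, -⟩ := Set.mem_iUnion₂.mp (hcov hx)
  exact ⟨c, hc⟩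

/-- boundedness of the log-ratio along the filter -/
lemma logratio_boundedUnder (m : ℕ) (Ω : Set (EuclideanSpace ℂ (Fin m)))
    (hbd : Bornology.IsBounded Ω) :
    IsBoundedUnder (· ≤ ·) (nhdsWithin (0:ℝ) (Set.Ioi 0))
      (fun σ : ℝ => Real.log (coveringNumber Ω σ) / Real.log (1/σ)) := by
  obtain ⟨R₀, hR₀⟩ := hbd.subset_closedBall 0
  set R : ℝ := max R₀ 0 with hRdef
  have hR : Ω ⊆ Metric.closedBall 0 R :=
    hR₀.trans (Metric.closedBall_subset_closedBall (le_max_left _ _))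
  have hRnn : 0 ≤ R := le_max_right _ _
  set A : ℝ := 2 * (R * (m+1)) + 5 with hA
  have hRm : (0:ℝ) ≤ R * (m+1) := by positivity
  have hA1 : 1 ≤ A := by nlinarith [hRm]
  have hApos : 0 < A := by linarith
  refine ⟨2*m*(Real.log A) + 2*m, ?_⟩
  rw [Filter.eventually_map]
  filter_upwards [Ioo_mem_nhdsGT_of_mem (Set.mem_Ico.mpr ⟨le_refl (0:ℝ), Real.exp_pos (-1)⟩)]
    with σ hσ
  obtain ⟨hσ0, hσe⟩ := hσ
  have hσ1 : σ ≤ 1 := by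
    have h1 : Real.exp (-1) < 1 := by
      rw [show (1:ℝ) = Real.exp 0 by rw [Real.exp_zero]]
      exact Real.exp_lt_exp.mpr (by norm_num)
    linarith
  set L : ℝ := Real.log (1/σ) with hL
  have hLlog : L = -Real.log σ := by rw [hL, one_div, Real.log_inv]
  have hlog1 : 1 ≤ L := by
    rw [hLlog]
    have : Real.log σ ≤ -1 := (Real.log_le_iff_le_exp hσ0).mpr hσe.le
    linarith
  have hLpos : 0 < L := lt_of_lt_of_le one_pos hlog1
  set n : ℕ := ⌈R * (m+1) / σ⌉₊ + 1 with hn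
  obtain ⟨C, hCcard, hCcov⟩ := grid_cover m Ω R hR hσ0
  have hN : coveringNumber Ω σ ≤ ((2*n+1)^2)^m :=
    (coveringNumber_le_card C hCcov).trans hCcard
  have hnr : (⌈R*(m+1)/σ⌉₊ : ℝ) * σ ≤ R*(m+1) + σ := by
    have h := (Nat.ceil_lt_add_one (by positivity : (0:ℝ) ≤ R*(m+1)/σ)).le
    calc (⌈R*(m+1)/σ⌉₊ : ℝ) * σ ≤ (R*(m+1)/σ + 1) * σ :=
          mul_le_mul_of_nonneg_right h hσ0.le
    _ = R*(m+1) + σ := by field_simp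
  have h2n1 : (2*n+1 : ℝ) ≤ A / σ := by
    rw [le_div_iff₀ hσ0, hn, hA]
    push_cast
    nlinarith [hnr, hσ1, hσ0.le]
  have h2n1one : (1:ℝ) ≤ 2*n+1 := by
    have : (0:ℝ) ≤ (n:ℝ) := Nat.cast_nonneg n
    linarith
  have hlogN : Real.log (coveringNumber Ω σ) ≤ (2*m) * Real.log (2*n+1 : ℝ) := by
    have hb : ((((2*n+1)^2)^m : ℕ) : ℝ) = ((2*n+1 : ℝ))^(2*m) := by
      push_cast
      rw [pow_mul]
    have hstep : Real.log (coveringNumber Ω σ) ≤ Real.log ((2*n+1 : ℝ)^(2*m)) := by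
      rcases Nat.eq_zero_or_pos (coveringNumber Ω σ) with h0 | hpos
      · rw [h0]
        simp only [Nat.cast_zero, Real.log_zero]
        exact Real.log_nonneg (one_le_pow₀ h2n1one)
      · refine Real.log_le_log (by exact_mod_cast hpos) ?_
        rw [← hb]
        exact_mod_cast hN
    rw [Real.log_pow] at hstep
    push_cast at hstep ⊢
    exact hstep
  have hlog2n1 : Real.log (2*n+1 : ℝ) ≤ Real.log A + L := by
    have h1 : Real.log (2*n+1 : ℝ) ≤ Real.log (A/σ) :=
      Real.log_le_log (by linarith) h2n1
    have h2 : Real.log (A/σ) = Real.log A + L := by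
      rw [Real.log_div (ne_of_gt hApos) (ne_of_gt hσ0), hLlog]; ring
    linarith
  have hmnn : (0:ℝ) ≤ 2*(m:ℝ) := by positivity
  have hlogAnn : 0 ≤ Real.log A := Real.log_nonneg hA1
  calc Real.log (coveringNumber Ω σ) / L ≤ ((2*m) * (Real.log A + L)) / L := by
        have hnum : Real.log (coveringNumber Ω σ) ≤ (2*m) * (Real.log A + L) :=
          hlogN.trans (mul_le_mul_of_nonneg_left hlog2n1 hmnn)
        exact div_le_div_of_nonneg_right hnum hLpos.le
  _ = (2*m*Real.log A) / L + 2*m := by field_simp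
  _ ≤ 2*m*Real.log A + 2*m := by
        have : (2*m*Real.log A) / L ≤ 2*m*Real.log A :=
          div_le_self (by positivity) hlog1
        linarith

noncomputable def rankOne {m1 m2 : ℕ} (u : EuclideanSpace ℂ (Fin m1))
    (v : EuclideanSpace ℂ (Fin m2)) : EuclideanSpace ℂ (Fin m1 × Fin m2) :=
  (WithLp.equiv 2 (Fin m1 × Fin m2 → ℂ)).symm (fun p => u p.1 * v p.2)

lemma rankOne_apply {m1 m2 : ℕ} (u : EuclideanSpace ℂ (Fin m1))
    (v : EuclideanSpace ℂ (Fin m2)) (p : Fin m1 × Fin m2) :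
    rankOne u v p = u p.1 * v p.2 := rfl

lemma norm_rankOne {m1 m2 : ℕ} (u : EuclideanSpace ℂ (Fin m1))
    (v : EuclideanSpace ℂ (Fin m2)) : ‖rankOne u v‖ = ‖u‖ * ‖v‖ := by
  rw [EuclideanSpace.norm_eq, EuclideanSpace.norm_eq, EuclideanSpace.norm_eq,
      ← Real.sqrt_mul (by positivity)]
  congr 1
  rw [Finset.sum_mul_sum]
  rw [← Finset.univ_product_univ, Finset.sum_product]
  apply Finset.sum_congr rfl
  intro i _
  apply Finset.sum_congr rfl
  intro j _
  rw [rankOne_apply, norm_mul, mul_pow]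

lemma norm_sub_rankOne {m1 m2 : ℕ} (x c : EuclideanSpace ℂ (Fin m1))
    (y d : EuclideanSpace ℂ (Fin m2)) :
    ‖rankOne x y - rankOne c d‖ ≤ ‖x - c‖ * ‖y‖ + ‖c‖ * ‖y - d‖ := by
  have hdecomp : rankOne x y - rankOne c d = rankOne (x - c) y + rankOne c (y - d) := by
    ext p
    show x p.1 * y p.2 - c p.1 * d p.2
      = (x p.1 - c p.1) * y p.2 + c p.1 * (y p.2 - d p.2)
    ring
  rw [hdecomp]
  refine (norm_add_le _ _).trans ?_
  rw [norm_rankOne, norm_rankOne]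

lemma cover_prod (m1 m2 : ℕ)
    (ΩX : Set (EuclideanSpace ℂ (Fin m1))) (ΩY : Set (EuclideanSpace ℂ (Fin m2)))
    (hXne : ΩX.Nonempty) (hYne : ΩY.Nonempty)
    (hXbd : Bornology.IsBounded ΩX) (hYbd : Bornology.IsBounded ΩY)
    (R : ℝ) (hRX : ∀ x ∈ ΩX, ‖x‖ ≤ R) (hRY : ∀ y ∈ ΩY, ‖y‖ ≤ R)
    {σ : ℝ} (hσ : 0 < σ) :
    coveringNumber {M : EuclideanSpace ℂ (Fin m1 × Fin m2) |
        ∃ x ∈ ΩX, ∃ y ∈ ΩY, ∀ p : Fin m1 × Fin m2, M p = x p.1 * y p.2} (4*R*σ)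
      ≤ coveringNumber ΩX σ * coveringNumber ΩY σ := by
  classical
  obtain ⟨CX, hCXcard, hCXcov⟩ := exists_cover_attained m1 ΩX hXbd hσ
  obtain ⟨CY, hCYcard, hCYcov⟩ := exists_cover_attained m2 ΩY hYbd hσ
  set rX : EuclideanSpace ℂ (Fin m1) → EuclideanSpace ℂ (Fin m1) := fun c =>
    if h : (ΩX ∩ Metric.closedBall c σ).Nonempty then h.choose else hXne.choose with hrX
  set rY : EuclideanSpace ℂ (Fin m2) → EuclideanSpace ℂ (Fin m2) := fun c =>
    if h : (ΩY ∩ Metric.closedBall c σ).Nonempty then h.choose else hYne.choose with hrY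
  have hrXmem : ∀ c, rX c ∈ ΩX := by
    intro c
    rw [hrX]
    by_cases h : (ΩX ∩ Metric.closedBall c σ).Nonempty
    · simp only [dif_pos h]; exact h.choose_spec.1
    · simp only [dif_neg h]; exact hXne.choose_spec
  have hrYmem : ∀ c, rY c ∈ ΩY := by
    intro c
    rw [hrY]
    by_cases h : (ΩY ∩ Metric.closedBall c σ).Nonempty
    · simp only [dif_pos h]; exact h.choose_spec.1
    · simp only [dif_neg h]; exact hYne.choose_spec
  have hrXclose : ∀ c x, x ∈ ΩX → x ∈ Metric.closedBall c σ → dist x (rX c) ≤ 2*σ := by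
    intro c x hx hball
    have h : (ΩX ∩ Metric.closedBall c σ).Nonempty := ⟨x, hx, hball⟩
    have hin : rX c ∈ ΩX ∩ Metric.closedBall c σ := by
      rw [hrX]; simp only [dif_pos h]; exact h.choose_spec
    calc dist x (rX c) ≤ dist x c + dist c (rX c) := dist_triangle _ _ _
    _ ≤ σ + σ := add_le_add (Metric.mem_closedBall.mp hball)
        (by rw [dist_comm]; exact Metric.mem_closedBall.mp hin.2)
    _ = 2*σ := by ring
  have hrYclose : ∀ c y, y ∈ ΩY → y ∈ Metric.closedBall c σ → dist y (rY c) ≤ 2*σ := by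
    intro c y hy hball
    have h : (ΩY ∩ Metric.closedBall c σ).Nonempty := ⟨y, hy, hball⟩
    have hin : rY c ∈ ΩY ∩ Metric.closedBall c σ := by
      rw [hrY]; simp only [dif_pos h]; exact h.choose_spec
    calc dist y (rY c) ≤ dist y c + dist c (rY c) := dist_triangle _ _ _
    _ ≤ σ + σ := add_le_add (Metric.mem_closedBall.mp hball)
        (by rw [dist_comm]; exact Metric.mem_closedBall.mp hin.2)
    _ = 2*σ := by ring
  set CM : Finset (EuclideanSpace ℂ (Fin m1 × Fin m2)) :=
    (CX ×ˢ CY).image (fun cd => rankOne (rX cd.1) (rY cd.2)) with hCM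
  have hcov : {M : EuclideanSpace ℂ (Fin m1 × Fin m2) |
      ∃ x ∈ ΩX, ∃ y ∈ ΩY, ∀ p : Fin m1 × Fin m2, M p = x p.1 * y p.2}
      ⊆ ⋃ c ∈ CM, Metric.closedBall c (4*R*σ) := by
    intro M hM
    obtain ⟨x, hx, y, hy, hMp⟩ := hM
    have hMeq : M = rankOne x y := PiLp.ext hMp
    obtain ⟨c, hc, hxc⟩ := Set.mem_iUnion₂.mp (hCXcov hx)
    obtain ⟨d, hd, hyd⟩ := Set.mem_iUnion₂.mp (hCYcov hy)
    refine Set.mem_iUnion₂.mpr ⟨rankOne (rX c) (rY d), ?_, ?_⟩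
    · rw [hCM, Finset.mem_image]
      exact ⟨(c, d), Finset.mem_product.mpr ⟨hc, hd⟩, rfl⟩
    · rw [Metric.mem_closedBall, dist_eq_norm, hMeq]
      have h1 : ‖x - rX c‖ ≤ 2*σ := by
        rw [← dist_eq_norm]; exact hrXclose c x hx hxc
      have h2 : ‖y - rY d‖ ≤ 2*σ := by
        rw [← dist_eq_norm]; exact hrYclose d y hy hyd
      have hRnn : (0:ℝ) ≤ R := le_trans (norm_nonneg _) (hRX _ hXne.choose_spec)
      calc ‖rankOne x y - rankOne (rX c) (rY d)‖
          ≤ ‖x - rX c‖ * ‖y‖ + ‖rX c‖ * ‖y - rY d‖ := norm_sub_rankOne _ _ _ _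
      _ ≤ (2*σ) * R + R * (2*σ) := add_le_add
            (mul_le_mul h1 (hRY y hy) (norm_nonneg _) (by positivity))
            (mul_le_mul (hRX _ (hrXmem c)) h2 (norm_nonneg _) hRnn)
      _ = 4*R*σ := by ring
  calc coveringNumber {M : EuclideanSpace ℂ (Fin m1 × Fin m2) |
        ∃ x ∈ ΩX, ∃ y ∈ ΩY, ∀ p : Fin m1 × Fin m2, M p = x p.1 * y p.2} (4*R*σ)
      ≤ CM.card := coveringNumber_le_card CM hcov
  _ ≤ (CX ×ˢ CY).card := Finset.card_image_le
  _ = CX.card * CY.card := Finset.card_product _ _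
  _ = coveringNumber ΩX σ * coveringNumber ΩY σ := by rw [hCXcard, hCYcard]

lemma log_nat_nonneg (n : ℕ) : 0 ≤ Real.log n := by
  rcases Nat.eq_zero_or_pos n with h|h
  · simp [h]
  · exact Real.log_nonneg (by exact_mod_cast h)

end Aux

/-- For nonempty bounded `Ω_X ⊆ ℂ^{m1}`, `Ω_Y ⊆ ℂ^{m2}` (Euclidean norm), the set of
rank-one matrices `Ω_M = {x yᵀ : x ∈ Ω_X, y ∈ Ω_Y}` (Frobenius norm) has upper Minkowski
dimension at most the sum of the upper Minkowski dimensions of `Ω_X` and `Ω_Y`. -/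
theorem upper_minkowski_dim_rank_one (m1 m2 : ℕ)
    (ΩX : Set (EuclideanSpace ℂ (Fin m1))) (ΩY : Set (EuclideanSpace ℂ (Fin m2)))
    (hXne : ΩX.Nonempty) (hYne : ΩY.Nonempty)
    (hXbd : Bornology.IsBounded ΩX) (hYbd : Bornology.IsBounded ΩY) :
    upperMinkowskiDim {M : EuclideanSpace ℂ (Fin m1 × Fin m2) |
        ∃ x ∈ ΩX, ∃ y ∈ ΩY, ∀ p : Fin m1 × Fin m2, M p = x p.1 * y p.2}
      ≤ upperMinkowskiDim ΩX + upperMinkowskiDim ΩY := by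
  classical
  obtain ⟨RX, hRX⟩ := hXbd.subset_closedBall 0
  obtain ⟨RY, hRY⟩ := hYbd.subset_closedBall 0
  set R : ℝ := max RX (max RY 1) with hRdef
  have hR1 : 1 ≤ R := le_trans (le_max_right RY 1) (le_max_right RX _)
  have hRXle : ∀ x ∈ ΩX, ‖x‖ ≤ R := by
    intro x hx
    have := hRX hx
    rw [Metric.mem_closedBall, dist_zero_right] at this
    exact this.trans (le_max_left _ _)
  have hRYle : ∀ y ∈ ΩY, ‖y‖ ≤ R := by
    intro y hy
    have := hRY hy
    rw [Metric.mem_closedBall, dist_zero_right] at this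
    exact this.trans (le_trans (le_max_left RY 1) (le_max_right RX _))
  set K : ℝ := 4*R with hK
  have hK1 : 1 ≤ K := by rw [hK]; linarith
  have hKpos : 0 < K := by linarith
  have hlogK : 0 ≤ Real.log K := Real.log_nonneg hK1
  unfold upperMinkowskiDim
  set F := nhdsWithin (0:ℝ) (Set.Ioi 0) with hF
  set ΩM : Set (EuclideanSpace ℂ (Fin m1 × Fin m2)) :=
    {M | ∃ x ∈ ΩX, ∃ y ∈ ΩY, ∀ p : Fin m1 × Fin m2, M p = x p.1 * y p.2} with hΩM
  set fX : ℝ → ℝ := fun ρ : ℝ => Real.log (coveringNumber ΩX ρ) / Real.log (1 / ρ) with hfX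
  set fY : ℝ → ℝ := fun ρ : ℝ => Real.log (coveringNumber ΩY ρ) / Real.log (1 / ρ) with hfY
  set fM : ℝ → ℝ := fun ρ : ℝ => Real.log (coveringNumber ΩM ρ) / Real.log (1 / ρ) with hfM
  have hbX := logratio_boundedUnder m1 ΩX hXbd
  have hbY := logratio_boundedUnder m2 ΩY hYbd
  have hIoo1 : ∀ᶠ σ in F, σ ∈ Set.Ioo (0:ℝ) 1 :=
    Ioo_mem_nhdsGT_of_mem (Set.mem_Ico.mpr ⟨le_refl 0, one_pos⟩)
  have hfX0 : ∀ᶠ σ in F, 0 ≤ fX σ := by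
    filter_upwards [hIoo1] with σ hσ
    exact div_nonneg (log_nat_nonneg _)
      (Real.log_nonneg (one_le_one_div hσ.1 hσ.2.le))
  have hfY0 : ∀ᶠ σ in F, 0 ≤ fY σ := by
    filter_upwards [hIoo1] with σ hσ
    exact div_nonneg (log_nat_nonneg _)
      (Real.log_nonneg (one_le_one_div hσ.1 hσ.2.le))
  have hfM0 : ∀ᶠ σ in F, 0 ≤ fM σ := by
    filter_upwards [hIoo1] with σ hσ
    exact div_nonneg (log_nat_nonneg _)
      (Real.log_nonneg (one_le_one_div hσ.1 hσ.2.le))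
  have hdX0 : 0 ≤ limsup fX F := le_limsup_of_frequently_le hfX0.frequently hbX
  have hdY0 : 0 ≤ limsup fY F := le_limsup_of_frequently_le hfY0.frequently hbY
  have hNXpos : ∀ σ : ℝ, 0 < σ → 0 < coveringNumber ΩX σ := by
    intro σ hσ
    obtain ⟨C, h1, h2⟩ := exists_cover_attained m1 ΩX hXbd hσ
    exact coveringNumber_pos hXne C h1 h2
  have hNYpos : ∀ σ : ℝ, 0 < σ → 0 < coveringNumber ΩY σ := by
    intro σ hσ
    obtain ⟨C, h1, h2⟩ := exists_cover_attained m2 ΩY hYbd hσ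
    exact coveringNumber_pos hYne C h1 h2
  have hprod : ∀ σ : ℝ, 0 < σ →
      coveringNumber ΩM (K*σ) ≤ coveringNumber ΩX σ * coveringNumber ΩY σ := by
    intro σ hσ
    have h := cover_prod m1 m2 ΩX ΩY hXne hYne hXbd hYbd R hRXle hRYle hσ
    have heq : K*σ = 4*R*σ := by rw [hK]
    rw [heq]
    exact h
  refine le_of_forall_pos_le_add fun ε hε => ?_
  set S := limsup fX F + limsup fY F + ε/2 with hS
  have hSpos : 0 < S := by rw [hS]; linarith
  set L := max 1 (2 * S * Real.log K / ε) with hLdef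
  have hL1 : (1:ℝ) ≤ L := le_max_left _ _
  have hLpos : (0:ℝ) < L := lt_of_lt_of_le one_pos hL1
  have htend : Tendsto (fun ρ : ℝ => ρ / K) F F := by
    apply tendsto_nhdsWithin_of_tendsto_nhds_of_eventually_within
    · have h0 : Tendsto (fun ρ : ℝ => ρ) F (nhds 0) :=
        tendsto_id.mono_right nhdsWithin_le_nhds
      simpa using h0.div_const K
    · filter_upwards [self_mem_nhdsWithin] with ρ hρ
      exact div_pos hρ hKpos
  have hEX : ∀ᶠ σ in F, fX σ ≤ limsup fX F + ε/4 := by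
    have h := eventually_lt_of_limsup_lt
      (show limsup fX F < limsup fX F + ε/4 by linarith) hbX
    exact h.mono fun σ hh => hh.le
  have hEY : ∀ᶠ σ in F, fY σ ≤ limsup fY F + ε/4 := by
    have h := eventually_lt_of_limsup_lt
      (show limsup fY F < limsup fY F + ε/4 by linarith) hbY
    exact h.mono fun σ hh => hh.le
  have hev : ∀ᶠ ρ in F, fM ρ ≤ S + ε/2 := by
    filter_upwards [htend.eventually hEX, htend.eventually hEY, htend.eventually hIoo1,
      self_mem_nhdsWithin,
      Ioo_mem_nhdsGT_of_mem (Set.mem_Ico.mpr ⟨le_refl (0:ℝ), Real.exp_pos (-L)⟩)]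
      with ρ hX' hY' hσIoo hρpos hρsmall
    have hρpos' : (0:ℝ) < ρ := hρpos
    set σ := ρ / K with hσdef
    have hσpos : 0 < σ := hσIoo.1
    have hσ1 : σ < 1 := hσIoo.2
    have hLρ : L ≤ Real.log (1/ρ) := by
      have h1 : Real.log ρ ≤ -L := (Real.log_le_iff_le_exp hρpos').mpr hρsmall.2.le
      rw [one_div, Real.log_inv]
      linarith
    have hLρpos : 0 < Real.log (1/ρ) := lt_of_lt_of_le hLpos hLρ
    have hLσ : Real.log (1/σ) = Real.log K + Real.log (1/ρ) := by
      have hσeq : 1/σ = K/ρ := by rw [hσdef, one_div_div]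
      rw [hσeq, Real.log_div (ne_of_gt hKpos) (ne_of_gt hρpos'), one_div, Real.log_inv]
      ring
    have hLσpos : 0 < Real.log (1/σ) := by rw [hLσ]; linarith
    have hNM : coveringNumber ΩM ρ ≤ coveringNumber ΩX σ * coveringNumber ΩY σ := by
      have h := hprod σ hσpos
      have heq : K * σ = ρ := by
        rw [hσdef]
        field_simp
      rwa [heq] at h
    have hNX1 : 0 < coveringNumber ΩX σ := hNXpos σ hσpos
    have hNY1 : 0 < coveringNumber ΩY σ := hNYpos σ hσpos
    have hlogNM : Real.log (coveringNumber ΩM ρ)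
        ≤ Real.log (coveringNumber ΩX σ) + Real.log (coveringNumber ΩY σ) := by
      rcases Nat.eq_zero_or_pos (coveringNumber ΩM ρ) with h0|hp
      · rw [h0]
        simp only [Nat.cast_zero, Real.log_zero]
        exact add_nonneg (log_nat_nonneg _) (log_nat_nonneg _)
      · have h1 : Real.log (coveringNumber ΩM ρ)
            ≤ Real.log ((coveringNumber ΩX σ * coveringNumber ΩY σ : ℕ) : ℝ) :=
          Real.log_le_log (by exact_mod_cast hp) (by exact_mod_cast hNM)
        rwa [Nat.cast_mul, Real.log_mul
          (by exact_mod_cast hNX1.ne') (by exact_mod_cast hNY1.ne')] at h1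
    have hstep1 : fM ρ ≤ (Real.log (coveringNumber ΩX σ)
        + Real.log (coveringNumber ΩY σ)) / Real.log (1/ρ) := by
      rw [hfM]
      exact div_le_div_of_nonneg_right hlogNM hLρpos.le
    have hsplit : (Real.log (coveringNumber ΩX σ) + Real.log (coveringNumber ΩY σ))
        / Real.log (1/ρ)
        = fX σ * (Real.log (1/σ) / Real.log (1/ρ))
          + fY σ * (Real.log (1/σ) / Real.log (1/ρ)) := by
      rw [hfX, hfY]
      field_simp
    have hratio : Real.log (1/σ) / Real.log (1/ρ) ≤ 1 + Real.log K / L := by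
      rw [hLσ, add_div]
      have h1 : Real.log K / Real.log (1/ρ) ≤ Real.log K / L :=
        div_le_div_of_nonneg_left hlogK hLpos hLρ
      have h2 : Real.log (1/ρ) / Real.log (1/ρ) = 1 := div_self (ne_of_gt hLρpos)
      rw [h2]
      linarith
    have hratio0 : 0 ≤ Real.log (1/σ) / Real.log (1/ρ) :=
      div_nonneg hLσpos.le hLρpos.le
    have hfXσ0 : 0 ≤ fX σ := div_nonneg (log_nat_nonneg _) hLσpos.le
    have hfYσ0 : 0 ≤ fY σ := div_nonneg (log_nat_nonneg _) hLσpos.le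
    have htermX : fX σ * (Real.log (1/σ) / Real.log (1/ρ))
        ≤ (limsup fX F + ε/4) * (1 + Real.log K / L) :=
      mul_le_mul hX' hratio hratio0 (by linarith)
    have htermY : fY σ * (Real.log (1/σ) / Real.log (1/ρ))
        ≤ (limsup fY F + ε/4) * (1 + Real.log K / L) :=
      mul_le_mul hY' hratio hratio0 (by linarith)
    have hSL : S * (Real.log K / L) ≤ ε/2 := by
      have hLge : 2 * S * Real.log K / ε ≤ L := le_max_right _ _
      rw [mul_div_assoc'] 
      rw [div_le_iff₀ hLpos]
      have hmul := mul_le_mul_of_nonneg_left hLge (by linarith : (0:ℝ) ≤ ε/2)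
      have hcalc : ε/2 * (2*S*Real.log K/ε) = S * Real.log K := by
        field_simp
      linarith
    have hfinal : (limsup fX F + ε/4) * (1 + Real.log K / L)
        + (limsup fY F + ε/4) * (1 + Real.log K / L) = S + S * (Real.log K / L) := by
      rw [hS]
      ring
    calc fM ρ ≤ _ := hstep1
    _ = _ := hsplit
    _ ≤ (limsup fX F + ε/4) * (1 + Real.log K / L)
          + (limsup fY F + ε/4) * (1 + Real.log K / L) := add_le_add htermX htermY
    _ = S + S * (Real.log K / L) := hfinal
    _ ≤ S + ε/2 := by linarith
  have hcb : IsCoboundedUnder (· ≤ ·) F fM :=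
    isCoboundedUnder_le_of_eventually_le F hfM0
  have hlim : limsup fM F ≤ S + ε/2 := limsup_le_of_le hcb hev
  rw [hS] at hlim
  linarith
end
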